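/- arXiv:2008.06317 — 7 statements merged into one kernel-verified Lean document; each statement's English description precedes it below -/
import Mathlib

section
/- Let n, l, q be positive integers and let f ∈ pdsp(n,l,q). Then the real multilinear polynomial representing f has degree n; equivalently, the top Fourier coefficient is nonzero: ∑_{x ∈ {0,1}^n} (−1)^{f(x) + x_1 + x_2 + ⋯ + x_n} ≠ 0. -/
/-- The class `pdsp(n, l, q)`: there exist pairwise disjoint subsets
`M 1, …, M q` of `{1,…,n}`, each of size at least `q`, whose union `S` has
size `l`, such that `f x = (⊕ᵢ ∏_{j ∈ M i} x j) · ∏_{p ∉ S} x p`. -/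
def IsPdsp (n l q : ℕ) (f : (Fin n → ZMod 2) → ZMod 2) : Prop :=
  ∃ M : Fin q → Finset (Fin n),
    (∀ i j : Fin q, i ≠ j → Disjoint (M i) (M j)) ∧
    (∀ i, q ≤ (M i).card) ∧
    (Finset.univ.biUnion M).card = l ∧
    ∀ x, f x = (∑ i : Fin q, ∏ j ∈ M i, x j) *
      ∏ p ∈ (Finset.univ.biUnion M)ᶜ, x p

private lemma zmod2_key1 : ∀ a : ZMod 2, ((-1:ℤ))^(a.val) = 1 - 2*(a.val:ℤ) := by decide

private lemma zmod2_val_mul : ∀ a b : ZMod 2, (((a*b)).val : ℤ) = (a.val:ℤ) * b.val := by decide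

private lemma zmod2_add_key : ∀ a b : ZMod 2, (1 - 2*((a+b).val:ℤ)) = (1 - 2*(a.val:ℤ))*(1-2*(b.val:ℤ)) := by decide

private lemma prod_one_sub_two {ι : Type*} [DecidableEq ι] (s : Finset ι) (g : ι → ZMod 2) :
    ∏ i ∈ s, (1 - 2 * ((g i).val : ℤ)) = 1 - 2 * ((∑ i ∈ s, g i).val : ℤ) := by
  induction s using Finset.induction with
  | empty => simp
  | @insert a s ha ih =>
      rw [Finset.prod_insert ha, Finset.sum_insert ha, ih, ← zmod2_add_key]

private lemma prod_val {ι : Type*} [DecidableEq ι] (s : Finset ι) (g : ι → ZMod 2) :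
    ∏ i ∈ s, ((g i).val : ℤ) = ((∏ i ∈ s, g i).val : ℤ) := by
  induction s using Finset.induction with
  | empty => simp only [Finset.prod_empty]; decide
  | @insert a s ha ih => rw [Finset.prod_insert ha, Finset.prod_insert ha, ih, zmod2_val_mul]

private lemma sum_prod_eq {n : ℕ} (g : Fin n → ZMod 2 → ℤ) :
    ∑ x : Fin n → ZMod 2, ∏ i, g i (x i) = ∏ i, ∑ b : ZMod 2, g i b := by
  rw [Finset.prod_univ_sum, Fintype.piFinset_univ]

private lemma helper {n : ℕ} (U : Finset (Fin n)) :
    ∑ x : Fin n → ZMod 2, (∏ j ∈ U, ((x j).val:ℤ)) * ∏ i, (1 - 2*((x i).val:ℤ))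
      = ∏ i, (if i ∈ U then (-1:ℤ) else 0) := by
  have h1 : ∀ x : Fin n → ZMod 2, (∏ j ∈ U, ((x j).val:ℤ)) * ∏ i, (1 - 2*((x i).val:ℤ))
      = ∏ i, ((if i ∈ U then ((x i).val:ℤ) else 1) * (1 - 2*((x i).val:ℤ))) := by
    intro x
    rw [Finset.prod_mul_distrib]
    congr 1
    rw [Finset.prod_ite_mem, Finset.univ_inter]
  simp only [h1]
  rw [sum_prod_eq (fun i b => (if i ∈ U then ((b).val:ℤ) else 1) * (1 - 2*((b).val:ℤ)))]
  apply Finset.prod_congr rfl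
  intro i _
  by_cases h : i ∈ U <;> simp only [h, if_true, if_false] <;> decide

/-- For `f ∈ pdsp(n,l,q)`, the top Fourier coefficient is nonzero, i.e.
the real multilinear polynomial representing `f` has degree `n`. -/
theorem stmt0 (n l q : ℕ) (hn : 0 < n) (hl : 0 < l) (hq : 0 < q)
    (f : (Fin n → ZMod 2) → ZMod 2) (hf : IsPdsp n l q f) :
    ∑ x : Fin n → ZMod 2, (-1 : ℤ) ^ ((f x).val + ∑ i : Fin n, (x i).val) ≠ 0 := by
  obtain ⟨M, hdisj, hcard, hS, hfx⟩ := hf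
  set S : Finset (Fin n) := Finset.univ.biUnion M with hSdef
  -- notation
  set R : (Fin n → ZMod 2) → ℤ := fun x => ∏ i, (1 - 2*((x i).val:ℤ)) with hR
  have hA : ∀ x : Fin n → ZMod 2, (-1:ℤ) ^ ((f x).val + ∑ i, (x i).val)
      = R x - 2*(((f x).val:ℤ) * R x) := by
    intro x
    rw [pow_add, zmod2_key1, ← Finset.prod_pow_eq_pow_sum]
    have h2 : ∏ i, (-1:ℤ)^((x i).val) = R x := Finset.prod_congr rfl fun i _ => zmod2_key1 _
    rw [h2]; ring
  rw [Finset.sum_congr rfl fun x _ => hA x, Finset.sum_sub_distrib, ← Finset.mul_sum]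
  have h0 : ∑ x : Fin n → ZMod 2, R x = 0 := by
    simp only [hR]
    rw [sum_prod_eq (fun i b => (1 - 2*((b).val:ℤ)))]
    exact Finset.prod_eq_zero (Finset.mem_univ ⟨0, hn⟩) (by decide)
  rw [h0, zero_sub, neg_ne_zero]
  have hSne : S.Nonempty := Finset.card_pos.mp (by rw [hS]; exact hl)
  have hW : 2 * ∑ x : Fin n → ZMod 2, ((f x).val:ℤ) * R x = -((-2:ℤ)^q * (-1)^n) := by
    rw [Finset.mul_sum]
    have hterm : ∀ x : Fin n → ZMod 2, 2 * (((f x).val:ℤ) * R x)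
        = (∏ p ∈ Sᶜ, ((x p).val : ℤ)) * R x
          - (∏ i : Fin q, (1 - 2 * ((∏ j ∈ M i, x j).val : ℤ))) * ((∏ p ∈ Sᶜ, ((x p).val:ℤ)) * R x) := by
      intro x
      have h1 : ((f x).val:ℤ) = ((∑ i : Fin q, ∏ j ∈ M i, x j).val:ℤ) * ((∏ p ∈ Sᶜ, x p).val:ℤ) := by
        rw [hfx x]; exact zmod2_val_mul _ _
      have h2 : ∏ i : Fin q, (1 - 2 * ((∏ j ∈ M i, x j).val : ℤ))
          = 1 - 2 * ((∑ i : Fin q, ∏ j ∈ M i, x j).val : ℤ) := prod_one_sub_two _ _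
      have h3 : ∏ p ∈ Sᶜ, ((x p).val : ℤ) = ((∏ p ∈ Sᶜ, x p).val:ℤ) := prod_val _ _
      rw [h1, h3]
      linear_combination (((∏ p ∈ Sᶜ, x p).val:ℤ) * R x) * h2
    rw [Finset.sum_congr rfl fun x _ => hterm x, Finset.sum_sub_distrib]
    have hT1 : ∑ x : Fin n → ZMod 2, (∏ p ∈ Sᶜ, ((x p).val:ℤ)) * R x = 0 := by
      simp only [hR]
      rw [helper (Sᶜ)]
      obtain ⟨j, hj⟩ := hSne
      exact Finset.prod_eq_zero (Finset.mem_univ j) (by simp [hj])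
    have hT2 : ∑ x : Fin n → ZMod 2,
        (∏ i : Fin q, (1 - 2 * ((∏ j ∈ M i, x j).val : ℤ))) * ((∏ p ∈ Sᶜ, ((x p).val:ℤ)) * R x)
        = (-2:ℤ)^q * (-1)^n := by
      have hexp : ∀ x : Fin n → ZMod 2, ∏ i : Fin q, (1 - 2*((∏ j ∈ M i, x j).val:ℤ))
          = ∑ T ∈ (Finset.univ : Finset (Fin q)).powerset,
              (-2:ℤ)^T.card * ∏ j ∈ T.biUnion M, ((x j).val:ℤ) := by
        intro x
        have e1 : ∀ i : Fin q, (1 - 2*((∏ j ∈ M i, x j).val:ℤ))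
            = (-2)*((∏ j ∈ M i, x j).val:ℤ) + 1 := fun i => by ring
        rw [Finset.prod_congr rfl fun i _ => e1 i, Finset.prod_add]
        refine Finset.sum_congr rfl fun T hT => ?_
        rw [Finset.prod_const_one, mul_one, Finset.prod_mul_distrib, Finset.prod_const]
        congr 1
        have hpd : (↑T : Set (Fin q)).PairwiseDisjoint M := fun i _ j _ hij => hdisj i j hij
        rw [Finset.prod_biUnion hpd]
        refine Finset.prod_congr rfl fun i _ => ?_
        exact (prod_val _ _).symm
      have hUdisj : ∀ T : Finset (Fin q), Disjoint (T.biUnion M) Sᶜ := by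
        intro T
        have hsub : T.biUnion M ⊆ S := by
          rw [hSdef]
          exact Finset.biUnion_subset_biUnion_of_subset_left M (Finset.subset_univ T)
        exact Disjoint.mono_left hsub disjoint_compl_right
      have hswap : ∑ x : Fin n → ZMod 2,
          (∏ i : Fin q, (1 - 2 * ((∏ j ∈ M i, x j).val : ℤ))) * ((∏ p ∈ Sᶜ, ((x p).val:ℤ)) * R x)
          = ∑ T ∈ (Finset.univ : Finset (Fin q)).powerset, ∑ x : Fin n → ZMod 2,
              (-2:ℤ)^T.card * ((∏ j ∈ T.biUnion M ∪ Sᶜ, ((x j).val:ℤ)) * R x) := by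
        rw [Finset.sum_comm]
        refine Finset.sum_congr rfl fun x _ => ?_
        rw [hexp x, Finset.sum_mul]
        refine Finset.sum_congr rfl fun T _ => ?_
        rw [Finset.prod_union (hUdisj T)]
        ring
      rw [hswap]
      have hfac : ∀ T ∈ (Finset.univ : Finset (Fin q)).powerset, (∑ x : Fin n → ZMod 2,
          (-2:ℤ)^T.card * ((∏ j ∈ T.biUnion M ∪ Sᶜ, ((x j).val:ℤ)) * R x))
          = (-2:ℤ)^T.card * ∏ i, (if i ∈ T.biUnion M ∪ Sᶜ then (-1:ℤ) else 0) := by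
        intro T _
        rw [← Finset.mul_sum]
        congr 1
        simp only [hR]
        exact helper _
      rw [Finset.sum_congr rfl hfac]
      rw [Finset.sum_eq_single_of_mem Finset.univ (Finset.mem_powerset_self _) ?_]
      · have hU : Finset.univ.biUnion M ∪ Sᶜ = Finset.univ := by
          rw [← hSdef, Finset.union_compl]
        rw [hU]
        simp [Finset.card_univ]
      · intro T hT hTne
        have hex : ∃ i0 : Fin q, i0 ∉ T := by
          by_contra hcon
          push_neg at hcon
          exact hTne (Finset.eq_univ_iff_forall.mpr hcon)
        obtain ⟨i0, hi0⟩ := hex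
        obtain ⟨j0, hj0⟩ : (M i0).Nonempty := Finset.card_pos.mp (lt_of_lt_of_le hq (hcard i0))
        have h1 : j0 ∉ T.biUnion M := by
          intro hmem
          obtain ⟨i, hiT, hji⟩ := Finset.mem_biUnion.mp hmem
          exact (Finset.disjoint_left.mp (hdisj i i0 (fun h => hi0 (h ▸ hiT))) hji) hj0
        have h2 : j0 ∈ S := by
          rw [hSdef]
          exact Finset.mem_biUnion.mpr ⟨i0, Finset.mem_univ _, hj0⟩
        have hj0n : j0 ∉ T.biUnion M ∪ Sᶜ := by
          simp [Finset.mem_union, Finset.mem_compl, h1, h2]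
        refine mul_eq_zero_of_right _ ?_
        exact Finset.prod_eq_zero (Finset.mem_univ j0) (by simp [hj0n])
    rw [hT1, hT2]; ring
  intro hcon
  rw [hcon] at hW
  have : ((-2:ℤ)^q * (-1)^n) ≠ 0 :=
    mul_ne_zero (pow_ne_zero _ (by norm_num)) (pow_ne_zero _ (by norm_num))
  simp at hW
end

section
/- Let n, l, q be positive integers and let f ∈ pdsp(n,l,q). Then there exists an integer α such that wt(f) = α·2^q + (−1)^{q−1}·2^{q−1}; in particular wt(f) ≡ 2^{q−1} (mod 2^q). -/
def chiZ (a : ZMod 2) : ℤ := if a = 1 then -1 else 1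

lemma chiZ_add (a b : ZMod 2) : chiZ (a + b) = chiZ a * chiZ b := by revert a b; decide

lemma chiZ_sum {ι : Type*} (s : Finset ι) (g : ι → ZMod 2) :
    chiZ (∑ i ∈ s, g i) = ∏ i ∈ s, chiZ (g i) := by
  induction s using Finset.cons_induction with
  | empty => simp [chiZ]
  | cons a s ha ih => rw [Finset.sum_cons, Finset.prod_cons, chiZ_add, ih]

lemma zmod2_prod_eq_one_iff {ι : Type*} (s : Finset ι) (g : ι → ZMod 2) :
    ∏ i ∈ s, g i = 1 ↔ ∀ i ∈ s, g i = 1 := by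
  constructor
  · intro h i hi
    by_contra hne
    have h0 : g i = 0 := (by decide : ∀ a : ZMod 2, a ≠ 1 → a = 0) _ hne
    have := Finset.prod_eq_zero hi h0
    rw [h] at this
    exact one_ne_zero this
  · exact Finset.prod_eq_one

lemma sum_chiZ_prod (β : Type*) [Fintype β] [DecidableEq β] :
    ∑ u : β → ZMod 2, chiZ (∏ j, u j) = 2 ^ Fintype.card β - 2 := by
  classical
  rw [← Finset.sum_filter_add_sum_filter_not Finset.univ
    (fun u : β → ZMod 2 => (∏ j, u j) = 1)]
  have h1 : (Finset.univ.filter fun u : β → ZMod 2 => (∏ j, u j) = 1)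
      = {fun _ => 1} := by
    ext u
    simp [zmod2_prod_eq_one_iff, funext_iff]
  have h2 : ∀ u ∈ Finset.univ.filter fun u : β → ZMod 2 => (∏ j, u j) = 1,
      chiZ (∏ j, u j) = -1 := by
    intro u hu
    simp only [Finset.mem_filter] at hu
    rw [hu.2]; rfl
  have h3 : ∀ u ∈ Finset.univ.filter fun u : β → ZMod 2 => ¬ (∏ j, u j) = 1,
      chiZ (∏ j, u j) = 1 := by
    intro u hu
    simp only [Finset.mem_filter] at hu
    exact if_neg hu.2
  rw [Finset.sum_congr rfl h2, Finset.sum_congr rfl h3, Finset.sum_const, Finset.sum_const]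
  rw [h1]
  have h4 : (Finset.univ.filter fun u : β → ZMod 2 => ¬ (∏ j, u j) = 1).card
      = 2 ^ Fintype.card β - 1 := by
    have htot := Finset.card_filter_add_card_filter_not
      (s := (Finset.univ : Finset (β → ZMod 2))) (p := fun u => (∏ j, u j) = 1)
    have hc1 : (Finset.univ.filter fun u : β → ZMod 2 => (∏ j, u j) = 1).card = 1 := by
      rw [h1, Finset.card_singleton]
    have hcu : (Finset.univ : Finset (β → ZMod 2)).card = 2 ^ Fintype.card β := by
      rw [Finset.card_univ, Fintype.card_fun, ZMod.card]
    rw [hc1, hcu] at htot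
    generalize hk : (Finset.univ.filter fun u : β → ZMod 2 => ¬ (∏ j, u j) = 1).card = k
    rw [hk] at htot
    clear h1 h2 h3 hc1 hcu hk
    omega
  rw [h4]
  have h5 : 1 ≤ 2 ^ Fintype.card β := Nat.one_le_two_pow
  simp only [Finset.card_singleton, nsmul_eq_mul, Nat.cast_sub h5]
  push_cast
  ring

lemma card_filter_ones (n : ℕ) (S : Finset (Fin n)) :
    (Finset.univ.filter fun x : Fin n → ZMod 2 => ∀ p ∉ S, x p = 1).card
      = 2 ^ S.card := by
  classical
  have : (Finset.univ.filter fun x : Fin n → ZMod 2 => ∀ p ∉ S, x p = 1).card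
      = (Finset.univ : Finset (↥S → ZMod 2)).card := by
    apply Finset.card_nbij' (fun x (j : ↥S) => x j.1)
      (fun g p => if h : p ∈ S then g ⟨p, h⟩ else 1)
    · intro x hx
      exact Finset.mem_univ _
    · intro g hg
      simp only [Finset.mem_coe, Finset.mem_filter, Finset.mem_univ, true_and]
      intro p hp
      exact dif_neg hp
    · intro x hx
      simp only [Finset.mem_coe, Finset.mem_filter, Finset.mem_univ, true_and] at hx
      funext p
      by_cases h : p ∈ S
      · simp [h]
      · simp [h, hx p h]
    · intro g hg
      funext j
      simp [j.2]
  rw [this, Finset.card_univ, Fintype.card_fun, ZMod.card, Fintype.card_coe]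

lemma key_sum (n q : ℕ) (M : Fin q → Finset (Fin n))
    (hd : ∀ i j : Fin q, i ≠ j → Disjoint (M i) (M j)) (s : Finset (Fin q)) :
    ∑ x ∈ Finset.univ.filter
        (fun x : Fin n → ZMod 2 => ∀ p ∉ s.biUnion M, x p = 1),
        ∏ i ∈ s, chiZ (∏ j ∈ M i, x j)
      = ∏ i ∈ s, ((2:ℤ) ^ (M i).card - 2) := by
  classical
  induction s using Finset.cons_induction with
  | empty =>
      have h1 : (Finset.univ.filter
          (fun x : Fin n → ZMod 2 => ∀ p ∉ (∅ : Finset (Fin q)).biUnion M, x p = 1))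
          = {fun _ => 1} := by
        ext x
        simp [funext_iff]
      rw [h1]
      simp
  | cons a s ha ih =>
      rw [Finset.prod_cons, ← ih,
        show ((2:ℤ) ^ (M a).card - 2) = ∑ u : ↥(M a) → ZMod 2, chiZ (∏ j, u j) from by
          rw [sum_chiZ_prod, Fintype.card_coe]]
      have hsum : ∑ x ∈ Finset.univ.filter
          (fun x : Fin n → ZMod 2 => ∀ p ∉ (Finset.cons a s ha).biUnion M, x p = 1),
          ∏ i ∈ Finset.cons a s ha, chiZ (∏ j ∈ M i, x j)
        = ∑ uy ∈ (Finset.univ : Finset (↥(M a) → ZMod 2)) ×ˢ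
            (Finset.univ.filter
              (fun x : Fin n → ZMod 2 => ∀ p ∉ s.biUnion M, x p = 1)),
            ∏ i ∈ Finset.cons a s ha, chiZ (∏ j ∈ M i,
              (fun p => if h : p ∈ M a then uy.1 ⟨p, h⟩ else uy.2 p) j) := by
        apply Finset.sum_nbij'
          (i := fun x => ((fun j : ↥(M a) => x j.1), fun p => if p ∈ M a then 1 else x p))
          (j := fun uy p => if h : p ∈ M a then uy.1 ⟨p, h⟩ else uy.2 p)
        · intro x hx
          simp only [Finset.mem_filter, Finset.mem_univ, true_and] at hx ⊢
          rw [Finset.mem_product]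
          refine ⟨Finset.mem_univ _, ?_⟩
          simp only [Finset.mem_filter, Finset.mem_univ, true_and]
          intro p hp
          by_cases h : p ∈ M a
          · simp [h]
          · simp only [if_neg h]
            apply hx
            intro hmem
            rw [Finset.mem_biUnion] at hmem
            obtain ⟨i, hi, hpi⟩ := hmem
            rw [Finset.mem_cons] at hi
            rcases hi with rfl | hi
            · exact h hpi
            · exact hp (Finset.mem_biUnion.2 ⟨i, hi, hpi⟩)
        · intro uy huy
          rw [Finset.mem_product] at huy
          simp only [Finset.mem_filter, Finset.mem_univ, true_and] at huy ⊢
          intro p hp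
          have hpa : p ∉ M a := by
            intro h
            exact hp (Finset.mem_biUnion.2 ⟨a, Finset.mem_cons_self a s, h⟩)
          rw [dif_neg hpa]
          apply huy
          intro hmem
          rw [Finset.mem_biUnion] at hmem
          obtain ⟨i, hi, hpi⟩ := hmem
          exact hp (Finset.mem_biUnion.2 ⟨i, Finset.mem_cons_of_mem hi, hpi⟩)
        · intro x hx
          funext p
          by_cases h : p ∈ M a
          · simp [h]
          · simp [h]
        · rintro ⟨u, y⟩ huy
          rw [Finset.mem_product] at huy
          have h2 := huy.2
          simp only [Finset.mem_filter, Finset.mem_univ, true_and] at h2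
          simp only [Prod.mk.injEq]
          constructor
          · funext j
            simp [j.2]
          · funext p
            by_cases h : p ∈ M a
            · have hpn : p ∉ s.biUnion M := by
                intro hmem
                rw [Finset.mem_biUnion] at hmem
                obtain ⟨i, hi, hpi⟩ := hmem
                have hne : i ≠ a := by rintro rfl; exact ha hi
                exact (Finset.disjoint_left.1 (hd i a hne) hpi) h
              rw [if_pos h]
              exact (h2 p hpn).symm
            · simp [h]
        · intro x hx
          apply Finset.prod_congr rfl
          intro i hi
          congr 1
          apply Finset.prod_congr rfl
          intro j hj
          by_cases h : j ∈ M a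
          · simp [h]
          · simp [h]
      rw [hsum, Finset.sum_product]
      have hinner : ∀ u : ↥(M a) → ZMod 2,
          ∀ y ∈ Finset.univ.filter
            (fun x : Fin n → ZMod 2 => ∀ p ∉ s.biUnion M, x p = 1),
          ∏ i ∈ Finset.cons a s ha, chiZ (∏ j ∈ M i,
              (fun p => if h : p ∈ M a then u ⟨p, h⟩ else y p) j)
          = chiZ (∏ j : ↥(M a), u j) * ∏ i ∈ s, chiZ (∏ j ∈ M i, y j) := by
        intro u y hy
        rw [Finset.prod_cons]
        congr 1
        · congr 1
          rw [Finset.univ_eq_attach, ← Finset.prod_attach (M a)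
            (fun j => if h : j ∈ M a then u ⟨j, h⟩ else y j)]
          apply Finset.prod_congr rfl
          intro j hj
          simp [j.2]
        · apply Finset.prod_congr rfl
          intro i hi
          congr 1
          apply Finset.prod_congr rfl
          intro j hj
          have hne : i ≠ a := by rintro rfl; exact ha hi
          have : j ∉ M a := Finset.disjoint_left.1 (hd i a hne) hj
          simp [this]
      calc ∑ u : ↥(M a) → ZMod 2, ∑ y ∈ Finset.univ.filter
            (fun x : Fin n → ZMod 2 => ∀ p ∉ s.biUnion M, x p = 1),
            ∏ i ∈ Finset.cons a s ha, chiZ (∏ j ∈ M i,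
              (fun p => if h : p ∈ M a then u ⟨p, h⟩ else y p) j)
          = ∑ u : ↥(M a) → ZMod 2, ∑ y ∈ Finset.univ.filter
            (fun x : Fin n → ZMod 2 => ∀ p ∉ s.biUnion M, x p = 1),
            chiZ (∏ j : ↥(M a), u j) * ∏ i ∈ s, chiZ (∏ j ∈ M i, y j) := by
            apply Finset.sum_congr rfl
            intro u _
            exact Finset.sum_congr rfl (hinner u)
        _ = (∑ u : ↥(M a) → ZMod 2, chiZ (∏ j : ↥(M a), u j)) *
            ∑ y ∈ Finset.univ.filter
            (fun x : Fin n → ZMod 2 => ∀ p ∉ s.biUnion M, x p = 1),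
            ∏ i ∈ s, chiZ (∏ j ∈ M i, y j) := by
            rw [Finset.sum_mul]
            apply Finset.sum_congr rfl
            intro u _
            rw [Finset.mul_sum]


/-- For `f ∈ pdsp(n,l,q)`, there is an integer `α` with
`wt(f) = α·2^q + (−1)^(q−1)·2^(q−1)`. -/
theorem stmt1 (n l q : ℕ) (hn : 0 < n) (hl : 0 < l) (hq : 0 < q)
    (f : (Fin n → ZMod 2) → ZMod 2) (hf : IsPdsp n l q f) :
    ∃ α : ℤ,
      ((Finset.univ.filter fun x : Fin n → ZMod 2 => f x = 1).card : ℤ)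
        = α * 2 ^ q + (-1) ^ (q - 1) * 2 ^ (q - 1) := by
  classical
  obtain ⟨M, hd, hMcard, hlcard, hfx⟩ := hf
  have hfilter : (Finset.univ.filter fun x : Fin n → ZMod 2 => f x = 1)
      = (Finset.univ.filter
          (fun x : Fin n → ZMod 2 => ∀ p ∉ Finset.univ.biUnion M, x p = 1)).filter
          (fun x => (∑ i : Fin q, ∏ j ∈ M i, x j) = 1) := by
    ext x
    simp only [Finset.mem_filter, Finset.mem_univ, true_and]
    rw [hfx x]
    have hmul : ∀ a b : ZMod 2, a * b = 1 ↔ a = 1 ∧ b = 1 := by decide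
    rw [hmul]
    have hprod : (∏ p ∈ (Finset.univ.biUnion M)ᶜ, x p) = 1
        ↔ ∀ p ∉ Finset.univ.biUnion M, x p = 1 := by
      rw [zmod2_prod_eq_one_iff]
      constructor
      · intro h p hp
        exact h p (Finset.mem_compl.2 hp)
      · intro h p hp
        exact h p (Finset.mem_compl.1 hp)
    tauto
  set T := Finset.univ.filter
    (fun x : Fin n → ZMod 2 => ∀ p ∉ Finset.univ.biUnion M, x p = 1) with hT
  set N := (T.filter (fun x => (∑ i : Fin q, ∏ j ∈ M i, x j) = 1)).card with hN
  rw [hfilter, ← hN]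
  -- character sum computation
  have hkey := key_sum n q M hd Finset.univ
  have hchi : ∀ x : Fin n → ZMod 2,
      ∏ i : Fin q, chiZ (∏ j ∈ M i, x j)
        = chiZ (∑ i : Fin q, ∏ j ∈ M i, x j) := fun x => (chiZ_sum _ _).symm
  rw [Finset.sum_congr rfl (fun x _ => hchi x)] at hkey
  -- split the sum by the filter
  have v1 : ∀ x ∈ T.filter (fun x => (∑ i : Fin q, ∏ j ∈ M i, x j) = 1),
      chiZ (∑ i : Fin q, ∏ j ∈ M i, x j) = -1 := by
    intro x hx
    rw [Finset.mem_filter] at hx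
    simp [chiZ, hx.2]
  have v2 : ∀ x ∈ T.filter (fun x => ¬ (∑ i : Fin q, ∏ j ∈ M i, x j) = 1),
      chiZ (∑ i : Fin q, ∏ j ∈ M i, x j) = 1 := by
    intro x hx
    rw [Finset.mem_filter] at hx
    simp [chiZ, if_neg hx.2]
  have e1 : ∑ x ∈ T.filter (fun x => (∑ i : Fin q, ∏ j ∈ M i, x j) = 1),
      chiZ (∑ i : Fin q, ∏ j ∈ M i, x j) = -(N : ℤ) := by
    rw [Finset.sum_congr rfl v1, Finset.sum_const, ← hN, nsmul_eq_mul]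
    ring
  have e2 : ∑ x ∈ T.filter (fun x => ¬ (∑ i : Fin q, ∏ j ∈ M i, x j) = 1),
      chiZ (∑ i : Fin q, ∏ j ∈ M i, x j) = (T.card : ℤ) - N := by
    rw [Finset.sum_congr rfl v2, Finset.sum_const, nsmul_eq_mul, mul_one]
    have hc := Finset.card_filter_add_card_filter_not
      (s := T) (p := fun x => (∑ i : Fin q, ∏ j ∈ M i, x j) = 1)
    rw [← hN] at hc
    have hc' := congrArg (fun t : ℕ => (t : ℤ)) hc
    push_cast at hc'
    linarith
  have hsplit : ∑ x ∈ T, chiZ (∑ i : Fin q, ∏ j ∈ M i, x j)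
      = (T.card : ℤ) - 2 * N := by
    rw [← Finset.sum_filter_add_sum_filter_not T
      (fun x => (∑ i : Fin q, ∏ j ∈ M i, x j) = 1), e1, e2]
    ring
  rw [hsplit] at hkey
  have hTcard : (T.card : ℤ) = 2 ^ l := by
    rw [hT, card_filter_ones n (Finset.univ.biUnion M), hlcard]
    norm_cast
  rw [hTcard] at hkey
  -- factor out 2^q
  have hM1 : ∀ i, 1 ≤ (M i).card := fun i => le_trans hq (hMcard i)
  have hfac : ∏ i : Fin q, ((2:ℤ) ^ (M i).card - 2)
      = 2 ^ q * ∏ i : Fin q, ((2:ℤ) ^ ((M i).card - 1) - 1) := by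
    have step : ∀ i : Fin q, ((2:ℤ) ^ (M i).card - 2)
        = 2 * ((2:ℤ) ^ ((M i).card - 1) - 1) := by
      intro i
      obtain ⟨k, hk⟩ : ∃ k, (M i).card = k + 1 :=
        ⟨(M i).card - 1, (Nat.succ_pred_eq_of_pos (hM1 i)).symm⟩
      rw [hk, Nat.add_sub_cancel, pow_succ]
      ring
    rw [Finset.prod_congr rfl (fun i _ => step i), Finset.prod_mul_distrib,
      Finset.prod_const, Finset.card_univ, Fintype.card_fin]
  rw [hfac] at hkey
  set P := ∏ i : Fin q, ((2:ℤ) ^ ((M i).card - 1) - 1) with hP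
  -- N = 2^(l-1) - 2^(q-1) * P
  obtain ⟨l', hl'⟩ : ∃ k, l = k + 1 := ⟨l - 1, (Nat.succ_pred_eq_of_pos hl).symm⟩
  obtain ⟨q', hq'⟩ : ∃ k, q = k + 1 := ⟨q - 1, (Nat.succ_pred_eq_of_pos hq).symm⟩
  have hl1 : l - 1 = l' := by rw [hl', Nat.add_sub_cancel]
  have hq1 : q - 1 = q' := by rw [hq', Nat.add_sub_cancel]
  have hNval : (N : ℤ) = 2 ^ (l - 1) - 2 ^ (q - 1) * P := by
    have h2 : (2:ℤ) * (N : ℤ) = 2 * (2 ^ (l - 1) - 2 ^ (q - 1) * P) := by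
      have e3 : (2:ℤ) ^ l = 2 * 2 ^ (l - 1) := by
        rw [hl1, hl', pow_succ]; ring
      have e4 : (2:ℤ) ^ q = 2 * 2 ^ (q - 1) := by
        rw [hq1, hq', pow_succ]; ring
      rw [e3, e4] at hkey
      linarith
    exact mul_left_cancel₀ two_ne_zero h2
  have hlsum : l = ∑ i : Fin q, (M i).card := by
    rw [← hlcard]
    exact Finset.card_biUnion (fun i _ j _ hij => hd i j hij)
  rcases eq_or_lt_of_le (Nat.one_le_iff_ne_zero.mpr hq.ne') with hq1' | hq2
  · -- q = 1
    have hqe : q = 1 := hq1'.symm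
    subst hqe
    have hl0 : l = (M 0).card := by
      rw [hlsum, Fin.sum_univ_one]
    have hPval : P = 2 ^ (l - 1) - 1 := by
      rw [hP, Fin.prod_univ_one, hl0]
    refine ⟨0, ?_⟩
    rw [hNval, hPval]
    norm_num
  · -- q ≥ 2
    have hqq : q + 1 ≤ l := by
      have hle : q * q ≤ l := by
        rw [hlsum]
        calc q * q = ∑ _i : Fin q, q := by
              rw [Finset.sum_const, Finset.card_univ, Fintype.card_fin,
                smul_eq_mul]
          _ ≤ ∑ i : Fin q, (M i).card :=
              Finset.sum_le_sum (fun i _ => hMcard i)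
      calc q + 1 ≤ q * q := by nlinarith
        _ ≤ l := hle
    have hql : q ≤ l - 1 := Nat.le_sub_one_of_lt hqq
    have hoddP : Odd P := by
      rw [hP]
      refine Finset.prod_induction _ Odd (fun a b => Odd.mul) odd_one ?_
      intro i _
      have h1 : 1 ≤ (M i).card - 1 :=
        Nat.le_sub_one_of_lt (lt_of_lt_of_le hq2 (hMcard i))
      obtain ⟨k, hk⟩ : ∃ k, (M i).card - 1 = k + 1 :=
        ⟨(M i).card - 1 - 1, (Nat.succ_pred_eq_of_pos h1).symm⟩
      have heven : Even ((2:ℤ) ^ ((M i).card - 1)) := by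
        refine ⟨2 ^ k, ?_⟩
        rw [hk, pow_succ]
        ring
      exact Even.sub_odd heven odd_one
    have hevensum : Even (P + (-1:ℤ) ^ (q - 1)) :=
      Odd.add_odd hoddP (Odd.pow (odd_neg_one (α := ℤ)))
    obtain ⟨c, hc⟩ := hevensum
    have hdvd : (2:ℤ) ^ q ∣ ((N : ℤ) - (-1) ^ (q - 1) * 2 ^ (q - 1)) := by
      have heq : (N : ℤ) - (-1) ^ (q - 1) * 2 ^ (q - 1)
          = 2 ^ (l - 1) - 2 ^ (q - 1) * (P + (-1) ^ (q - 1)) := by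
        rw [hNval]; ring
      rw [heq, hc]
      have d1 : (2:ℤ) ^ q ∣ 2 ^ (l - 1) := pow_dvd_pow 2 hql
      have d2 : (2:ℤ) ^ q ∣ 2 ^ (q - 1) * (c + c) := by
        refine ⟨c, ?_⟩
        rw [hq1, hq', pow_succ]
        ring
      exact dvd_sub d1 d2
    obtain ⟨α, hα⟩ := hdvd
    refine ⟨α, ?_⟩
    have hfin : (N : ℤ) = 2 ^ q * α + (-1) ^ (q - 1) * 2 ^ (q - 1) := by
      linarith
    rw [hfin]; ring
end

section
/- Let n, l, q be positive integers with q < n and let f ∈ pdsp(n,l,q). Then the integer ∑_{x ∈ {0,1}^n} (−1)^{f(x)} = 2^n − 2·wt(f) is divisible by 2^q but not by 2^{q+1}. Equivalently, the Fourier coefficient f̂(∅) = 2^{−n} ∑_{x ∈ {0,1}^n} (−1)^{f(x)} has granularity exactly n − q, i.e., 2^{n−q}·f̂(∅) is an odd integer. -/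
lemma chi_val (a : ZMod 2) : (-1:ℤ)^(a.val) = 1 - 2 * (a.val : ℤ) := by
  fin_cases a <;> rfl

lemma chi_sum {ι : Type*} (s : Finset ι) (g : ι → ZMod 2) :
    (-1:ℤ)^((∑ i ∈ s, g i).val) = ∏ i ∈ s, (-1:ℤ)^((g i).val) := by
  induction s using Finset.cons_induction with
  | empty => simp
  | cons a s ha ih =>
    rw [Finset.sum_cons, Finset.prod_cons, ← ih]
    generalize (∑ i ∈ s, g i) = v
    generalize g a = u
    fin_cases u <;> fin_cases v <;> rfl

lemma val_prod {ι : Type*} (s : Finset ι) (g : ι → ZMod 2) :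
    (((∏ i ∈ s, g i).val : ℤ)) = ∏ i ∈ s, ((g i).val : ℤ) := by
  induction s using Finset.cons_induction with
  | empty => rw [Finset.prod_empty, Finset.prod_empty]; rfl
  | cons a s ha ih =>
    rw [Finset.prod_cons, Finset.prod_cons, ← ih]
    generalize (∏ i ∈ s, g i) = v
    generalize g a = u
    fin_cases u <;> fin_cases v <;> rfl

lemma zmod_sum_val : ∑ a : ZMod 2, ((a.val : ℤ)) = 1 := rfl

lemma sum_prod_val (n : ℕ) (W : Finset (Fin n)) :
    ∑ x : Fin n → ZMod 2, ∏ j ∈ W, ((x j).val : ℤ) = 2 ^ (n - W.card) := by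
  calc ∑ x : Fin n → ZMod 2, ∏ j ∈ W, ((x j).val:ℤ)
      = ∑ x ∈ Fintype.piFinset (fun _ : Fin n => (Finset.univ : Finset (ZMod 2))),
          ∏ j : Fin n, (if j ∈ W then ((x j).val:ℤ) else 1) := by
        rw [Fintype.piFinset_univ]
        refine Finset.sum_congr rfl fun x _ => ?_
        rw [Finset.prod_ite_mem, Finset.univ_inter]
    _ = ∏ j : Fin n, ∑ a : ZMod 2, (if j ∈ W then ((a.val:ℤ)) else 1) := by
        rw [Finset.prod_univ_sum]
    _ = ∏ j : Fin n, (if j ∈ W then 1 else 2) := by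
        refine Finset.prod_congr rfl fun j _ => ?_
        by_cases hj : j ∈ W
        · simp only [hj, if_true]; exact zmod_sum_val
        · simp [hj]
    _ = 2 ^ (n - W.card) := by
        rw [Finset.prod_ite, Finset.prod_const, Finset.prod_const, one_pow, one_mul,
          Finset.filter_not, Finset.filter_mem_eq_inter, Finset.univ_inter,
          Finset.card_sdiff_of_subset (Finset.subset_univ W), Finset.card_univ, Fintype.card_fin]

/-- For `f ∈ pdsp(n,l,q)` with `q < n`, the integer
`∑ₓ (−1)^{f(x)} = 2^n − 2·wt(f)` is divisible by `2^q` but not by `2^(q+1)`,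
i.e. `f̂(∅)` has granularity exactly `n − q`. -/
theorem stmt2 (n l q : ℕ) (hn : 0 < n) (hl : 0 < l) (hq : 0 < q) (hqn : q < n)
    (f : (Fin n → ZMod 2) → ZMod 2) (hf : IsPdsp n l q f) :
    (∑ x : Fin n → ZMod 2, (-1 : ℤ) ^ (f x).val
        = 2 ^ n - 2 * ((Finset.univ.filter fun x : Fin n → ZMod 2 => f x = 1).card : ℤ)) ∧
    ((2 : ℤ) ^ q ∣ ∑ x : Fin n → ZMod 2, (-1 : ℤ) ^ (f x).val) ∧
    ¬ ((2 : ℤ) ^ (q + 1) ∣ ∑ x : Fin n → ZMod 2, (-1 : ℤ) ^ (f x).val) := by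
  obtain ⟨M, hdisj, hcard, hScard, hfe⟩ := hf
  set S : Finset (Fin n) := Finset.univ.biUnion M with hS
  have hcardfun : Fintype.card (Fin n → ZMod 2) = 2 ^ n := by
    simp [Fintype.card_fun]
  have hlsum : ∑ i : Fin q, (M i).card = l := by
    rw [← hScard, Finset.card_biUnion (fun i _ j _ h => hdisj i j h)]
  have hln : l ≤ n := by
    rw [← hScard]
    simpa using Finset.card_le_univ S
  have hql : q * q ≤ l := by
    calc q * q = ∑ _i : Fin q, q := by simp [Finset.sum_const, mul_comm]
    _ ≤ ∑ i : Fin q, (M i).card := Finset.sum_le_sum fun i _ => hcard i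
    _ = l := hlsum
  have hq_le_l : q ≤ l := le_trans (Nat.le_mul_of_pos_left q hq) hql
  have hnl : n - (n - l) = l := by omega
  have hqn' : q + (n - q) = n := by omega
  have hql' : q + (l - q) = l := by omega
  -- first conjunct
  have hwt : ∑ x : Fin n → ZMod 2, (-1:ℤ)^(f x).val
      = 2^n - 2 * ((Finset.univ.filter fun x : Fin n → ZMod 2 => f x = 1).card : ℤ) := by
    have h1 : ∀ x : Fin n → ZMod 2, (-1:ℤ)^(f x).val
        = 1 - 2 * (if f x = 1 then (1:ℤ) else 0) := by
      intro x; generalize f x = a; fin_cases a <;> decide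
    rw [Finset.sum_congr rfl fun x _ => h1 x, Finset.sum_sub_distrib, Finset.sum_const,
      Finset.card_univ, hcardfun, ← Finset.mul_sum, Finset.sum_boole]
    norm_num
  refine ⟨hwt, ?_⟩
  -- pointwise identity
  have hpt : ∀ x : Fin n → ZMod 2, (-1:ℤ)^(f x).val
      = 1 - (∏ p ∈ Sᶜ, ((x p).val:ℤ))
        + (∏ i : Fin q, (1 - 2 * ∏ j ∈ M i, ((x j).val:ℤ))) * ∏ p ∈ Sᶜ, ((x p).val:ℤ) := by
    intro x
    by_cases hB : ∀ p ∈ Sᶜ, x p = 1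
    · have hB1 : ∏ p ∈ Sᶜ, x p = 1 := Finset.prod_eq_one hB
      have hBv : ∏ p ∈ Sᶜ, ((x p).val : ℤ) = 1 :=
        Finset.prod_eq_one fun p hp => by rw [hB p hp]; rfl
      rw [hfe, hB1, mul_one, hBv, chi_sum]
      have h2 : ∀ i : Fin q, (-1:ℤ)^((∏ j ∈ M i, x j).val)
          = 1 - 2 * ∏ j ∈ M i, ((x j).val:ℤ) := fun i => by rw [chi_val, val_prod]
      rw [Finset.prod_congr rfl fun i _ => h2 i]
      ring
    · push_neg at hB
      obtain ⟨p, hp, hxp⟩ := hB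
      have hx0 : x p = 0 := by
        generalize x p = a at hxp; fin_cases a
        · rfl
        · exact absurd rfl hxp
      have hB0 : ∏ r ∈ Sᶜ, x r = 0 := Finset.prod_eq_zero hp hx0
      have hBv0 : ∏ r ∈ Sᶜ, ((x r).val:ℤ) = 0 := Finset.prod_eq_zero hp (by rw [hx0]; rfl)
      rw [hfe, hB0, mul_zero, hBv0, mul_zero]
      norm_num [ZMod.val_zero]
  -- the third term
  have hdisjU : ∀ U : Finset (Fin q), Disjoint (U.biUnion M) Sᶜ := by
    intro U
    have hsub : U.biUnion M ⊆ S :=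
      Finset.biUnion_subset_biUnion_of_subset_left M (Finset.subset_univ U)
    exact disjoint_compl_right.mono_left hsub
  have hT3 : ∑ x : Fin n → ZMod 2,
      (∏ i : Fin q, (1 - 2 * ∏ j ∈ M i, ((x j).val:ℤ))) * ∏ p ∈ Sᶜ, ((x p).val:ℤ)
      = ∏ i : Fin q, ((2:ℤ)^(M i).card - 2) := by
    have hx : ∀ x : Fin n → ZMod 2,
        (∏ i : Fin q, (1 - 2 * ∏ j ∈ M i, ((x j).val:ℤ))) * ∏ p ∈ Sᶜ, ((x p).val:ℤ)
        = ∑ U ∈ (Finset.univ : Finset (Fin q)).powerset,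
            (-2:ℤ)^U.card * ∏ j ∈ U.biUnion M ∪ Sᶜ, ((x j).val:ℤ) := by
      intro x
      have e1 : ∏ i : Fin q, (1 - 2 * ∏ j ∈ M i, ((x j).val:ℤ))
          = ∏ i : Fin q, ((-(2 * ∏ j ∈ M i, ((x j).val:ℤ))) + 1) :=
        Finset.prod_congr rfl fun i _ => by ring
      rw [e1, Finset.prod_add, Finset.sum_mul]
      refine Finset.sum_congr rfl fun U hU => ?_
      rw [Finset.prod_const_one, mul_one]
      have e2 : ∏ i ∈ U, (-(2 * ∏ j ∈ M i, ((x j).val:ℤ)))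
          = (-2:ℤ)^U.card * ∏ i ∈ U, ∏ j ∈ M i, ((x j).val:ℤ) := by
        rw [← Finset.prod_const, ← Finset.prod_mul_distrib]
        exact Finset.prod_congr rfl fun i _ => by ring
      rw [e2, mul_assoc]
      congr 1
      rw [← Finset.prod_biUnion (fun i _ j _ hij => hdisj i j hij),
        ← Finset.prod_union (hdisjU U)]
    rw [Finset.sum_congr rfl fun x _ => hx x, Finset.sum_comm]
    have hUval : ∀ U ∈ (Finset.univ : Finset (Fin q)).powerset,
        ∑ x : Fin n → ZMod 2, (-2:ℤ)^U.card * ∏ j ∈ U.biUnion M ∪ Sᶜ, ((x j).val:ℤ)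
        = (-2:ℤ)^U.card * 2^(∑ i ∈ Finset.univ \ U, (M i).card) := by
      intro U hU
      rw [← Finset.mul_sum, sum_prod_val]
      congr 2
      have hc1 : (U.biUnion M ∪ Sᶜ).card = (∑ i ∈ U, (M i).card) + (n - l) := by
        rw [Finset.card_union_of_disjoint (hdisjU U),
          Finset.card_biUnion (fun i _ j _ h => hdisj i j h), Finset.card_compl,
          Fintype.card_fin, hScard]
      have hc2 : (∑ i ∈ U, (M i).card) + ∑ i ∈ Finset.univ \ U, (M i).card = l := by
        rw [add_comm, Finset.sum_sdiff (Finset.mem_powerset.mp hU)]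
        exact hlsum
      omega
    rw [Finset.sum_congr rfl hUval]
    have e3 : ∏ i : Fin q, ((2:ℤ)^(M i).card - 2)
        = ∏ i : Fin q, ((-2:ℤ) + 2^(M i).card) :=
      Finset.prod_congr rfl fun i _ => by ring
    rw [e3, Finset.prod_add]
    refine Finset.sum_congr rfl fun U hU => ?_
    rw [Finset.prod_const, Finset.prod_pow_eq_pow_sum]
  -- main sum formula
  have hsum : ∑ x : Fin n → ZMod 2, (-1:ℤ)^(f x).val
      = 2^n - 2^l + ∏ i : Fin q, ((2:ℤ)^(M i).card - 2) := by
    rw [Finset.sum_congr rfl fun x _ => hpt x, Finset.sum_add_distrib,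
      Finset.sum_sub_distrib, Finset.sum_const, Finset.card_univ, hcardfun,
      sum_prod_val, hT3, Finset.card_compl, Fintype.card_fin, hScard]
    rw [hnl]
    norm_num
  -- factor out 2^q
  have hfac : ∏ i : Fin q, ((2:ℤ)^(M i).card - 2)
      = 2^q * ∏ i : Fin q, ((2:ℤ)^((M i).card - 1) - 1) := by
    have e4 : ∀ i : Fin q, (2:ℤ)^(M i).card - 2 = 2 * ((2:ℤ)^((M i).card - 1) - 1) := by
      intro i
      have hm : (M i).card - 1 + 1 = (M i).card := Nat.succ_pred_eq_of_pos (lt_of_lt_of_le hq (hcard i))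
      calc (2:ℤ)^(M i).card - 2 = 2^((M i).card - 1 + 1) - 2 := by rw [hm]
        _ = 2 * ((2:ℤ)^((M i).card - 1) - 1) := by rw [pow_succ]; ring
    rw [Finset.prod_congr rfl fun i _ => e4 i, Finset.prod_mul_distrib, Finset.prod_const]
    simp
  have hsum2 : ∑ x : Fin n → ZMod 2, (-1:ℤ)^(f x).val
      = 2^q * ((2:ℤ)^(n-q) - 2^(l-q) + ∏ i : Fin q, ((2:ℤ)^((M i).card - 1) - 1)) := by
    rw [hsum, hfac]
    have e5 : (2:ℤ)^n = 2^q * 2^(n-q) := by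
      rw [← pow_add, hqn']
    have e6 : (2:ℤ)^l = 2^q * 2^(l-q) := by
      rw [← pow_add, hql']
    rw [e5, e6]; ring
  constructor
  · rw [hsum2]; exact Dvd.intro _ rfl
  · rw [hsum2, pow_succ]
    intro hdvd
    have h2K : (2:ℤ) ∣ ((2:ℤ)^(n-q) - 2^(l-q) + ∏ i : Fin q, ((2:ℤ)^((M i).card - 1) - 1)) := by
      have h2q : ((2:ℤ)^q) ≠ 0 := by positivity
      rcases hdvd with ⟨c, hc⟩
      rw [mul_assoc] at hc
      exact ⟨c, mul_left_cancel₀ h2q hc⟩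
    clear hdvd hsum2 hsum hfac hT3 hwt hpt hfe hdisjU hdisj
    have hevenA : (2:ℤ) ∣ 2^(n-q) := dvd_pow_self 2 (by omega)
    by_cases hone : ∃ i : Fin q, (M i).card = 1
    · obtain ⟨i, hi⟩ := hone
      have hq1 : q = 1 := by have := hcard i; omega
      have hl1 : l = 1 := by
        obtain ⟨a, ha⟩ := Finset.card_eq_one.mp
          (by rw [Finset.card_univ, Fintype.card_fin, hq1] :
            (Finset.univ : Finset (Fin q)).card = 1)
        have hia : i = a := by
          have hmem : i ∈ (Finset.univ : Finset (Fin q)) := Finset.mem_univ i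
          rw [ha, Finset.mem_singleton] at hmem
          exact hmem
        rw [← hlsum, ha, Finset.sum_singleton, ← hia, hi]
      have hQ0 : ∏ i : Fin q, ((2:ℤ)^((M i).card - 1) - 1) = 0 := by
        refine Finset.prod_eq_zero (Finset.mem_univ i) ?_
        rw [hi]
        norm_num
      have hlq0 : l - q = 0 := by omega
      rw [hQ0, hlq0, pow_zero] at h2K
      revert h2K hevenA
      generalize (2:ℤ)^(n-q) = A
      intro h1 h2
      omega
    · push_neg at hone
      have hQodd : Odd (∏ i : Fin q, ((2:ℤ)^((M i).card - 1) - 1)) := by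
        refine Finset.prod_induction _ Odd (fun a b => Odd.mul) odd_one ?_
        intro i _
        have hmi : 2 ≤ (M i).card := by have := hcard i; have := hone i; omega
        have heven : Even ((2:ℤ)^((M i).card - 1)) := by
          have hrr : (2:ℤ)^((M i).card - 1) = 2^((M i).card - 2) * 2 := by
            rw [← pow_succ]
            congr 1
            omega
          rw [hrr]
          exact even_two.mul_left _
        exact heven.sub_odd odd_one
      have h2q : 2 * q ≤ l := by
        have : 2 * q = ∑ _i : Fin q, 2 := by simp [Finset.sum_const, mul_comm]
        rw [this, ← hlsum]
        exact Finset.sum_le_sum fun i _ => by have := hcard i; have := hone i; omega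
      have hevenB : (2:ℤ) ∣ 2^(l-q) := dvd_pow_self 2 (by omega)
      have hQ1 : (∏ i : Fin q, ((2:ℤ)^((M i).card - 1) - 1)) % 2 = 1 := Int.odd_iff.mp hQodd
      revert h2K hevenA hevenB hQ1
      generalize (2:ℤ)^(n-q) = A
      generalize (2:ℤ)^(l-q) = B
      generalize (∏ i : Fin q, ((2:ℤ)^((M i).card - 1) - 1)) = C
      intro h1 h2 h3 h4
      omega
end

section
/- Let q ≥ 1 and let M_1,…,M_q be pairwise disjoint nonempty subsets of a finite set S whose union is S, with |M_i| ≥ q for every i. Then for every j with 0 ≤ j ≤ q, the number of assignments x ∈ {0,1}^S for which exactly j of the q monomials ∏_{r∈M_i} x_r evaluate to 1 is congruent to (−1)^{q−j}·C(q,j) modulo 2^q; in particular, for odd j it is congruent to (−1)^{q−1}·C(q,j) modulo 2^q. -/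
open Finset

lemma zmod2_ne_one {a : ZMod 2} (h : a ≠ 1) : a = 0 := by
  revert h; revert a; decide

lemma zmod2_prod_eq_one {α : Type*} (s : Finset α) (x : α → ZMod 2) :
    (∏ r ∈ s, x r) = 1 ↔ ∀ r ∈ s, x r = 1 := by
  constructor
  · intro h
    by_contra hc
    push_neg at hc
    obtain ⟨r, hr, hr1⟩ := hc
    have h0 : (∏ r ∈ s, x r) = 0 := Finset.prod_eq_zero hr (zmod2_ne_one hr1)
    rw [h0] at h
    exact absurd h (by decide)
  · exact Finset.prod_eq_one

lemma fiber_card {α : Type*} [Fintype α] [DecidableEq α] (q : ℕ)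
    (M : Fin q → Finset α)
    (hdisj : ∀ i j : Fin q, i ≠ j → Disjoint (M i) (M j))
    (hcover : Finset.univ.biUnion M = Finset.univ)
    (T : Finset (Fin q)) :
    (Finset.univ.filter fun x : α → ZMod 2 =>
        (Finset.univ.filter fun i : Fin q => (∏ r ∈ M i, x r) = 1) = T).card
      = ∏ i, (if i ∈ T then 1 else 2 ^ (M i).card - 1) := by
  classical
  have hex : ∀ a : α, ∃ i, a ∈ M i := by
    intro a
    have : a ∈ Finset.univ.biUnion M := by rw [hcover]; exact mem_univ a
    simpa using this
  choose ind hind using hex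
  have huniq : ∀ (a : α) (i : Fin q), a ∈ M i → ind a = i := by
    intro a i h
    by_contra hne'
    exact (Finset.disjoint_left.mp (hdisj _ _ hne')) (hind a) h
  set t : ∀ i : Fin q, Finset (↥(M i) → ZMod 2) :=
    fun i => Finset.univ.filter (fun g => (∀ r : ↥(M i), g r = 1) ↔ i ∈ T) with ht
  have hdep : ∀ (f : ∀ i : Fin q, ↥(M i) → ZMod 2) (i i' : Fin q) (h : i = i')
      (a : α) (h1 : a ∈ M i) (h2 : a ∈ M i'), f i ⟨a, h1⟩ = f i' ⟨a, h2⟩ := by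
    rintro f i i' rfl a h1 h2; rfl
  have hcard : (Finset.univ.filter fun x : α → ZMod 2 =>
        (Finset.univ.filter fun i : Fin q => (∏ r ∈ M i, x r) = 1) = T).card
      = (Fintype.piFinset t).card := by
    apply Finset.card_bij' (fun x _ => fun i (r : ↥(M i)) => x r)
      (fun f _ => fun a => f (ind a) ⟨a, hind a⟩)
    · intro x hx
      rw [mem_filter] at hx
      rw [Fintype.mem_piFinset]
      intro i
      rw [ht]
      simp only [mem_filter, mem_univ, true_and]
      rw [Subtype.forall]
      rw [← zmod2_prod_eq_one]
      rw [← hx.2]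
      simp
    · intro f hf
      rw [Fintype.mem_piFinset] at hf
      rw [mem_filter]
      refine ⟨mem_univ _, ?_⟩
      ext i
      have hfi := hf i
      rw [ht] at hfi
      simp only [mem_filter, mem_univ, true_and] at hfi ⊢
      rw [zmod2_prod_eq_one]
      rw [← hfi]
      constructor
      · intro h r
        have := h r.1 r.2
        rwa [hdep f _ _ (huniq r.1 i r.2) r.1 (hind r.1) r.2] at this
      · intro h r hr
        rw [hdep f _ _ (huniq r i hr) r (hind r) hr]
        exact h ⟨r, hr⟩
    · intro x hx; rfl
    · intro f hf
      funext i r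
      exact hdep f _ _ (huniq r.1 i r.2) r.1 (hind r.1) r.2
  rw [hcard, Fintype.card_piFinset]
  apply Finset.prod_congr rfl
  intro i _
  rw [ht]
  by_cases hiT : i ∈ T
  · simp only [hiT, iff_true, if_true]
    have : (Finset.univ.filter (fun g : ↥(M i) → ZMod 2 => ∀ r, g r = 1))
        = {fun _ => 1} := by
      ext g
      simp only [mem_filter, mem_univ, true_and, mem_singleton]
      rw [funext_iff]
    rw [this, card_singleton]
  · simp only [hiT, iff_false, if_false]
    have h1 : (Finset.univ.filter (fun g : ↥(M i) → ZMod 2 => ∀ r, g r = 1)).card = 1 := by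
      have : (Finset.univ.filter (fun g : ↥(M i) → ZMod 2 => ∀ r, g r = 1))
          = {fun _ => 1} := by
        ext g
        simp only [mem_filter, mem_univ, true_and, mem_singleton]
        rw [funext_iff]
      rw [this, card_singleton]
    have h2 := Finset.card_filter_add_card_filter_not
      (s := (Finset.univ : Finset (↥(M i) → ZMod 2)))
      (p := fun g : ↥(M i) → ZMod 2 => ∀ r, g r = 1)
    have h3 : (Finset.univ : Finset (↥(M i) → ZMod 2)).card = 2 ^ (M i).card := by
      rw [Finset.card_univ, Fintype.card_fun]
      simp [Fintype.card_coe]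
    rw [h3, h1] at h2
    exact Nat.eq_sub_of_add_eq' h2


/-- For pairwise disjoint nonempty subsets `M 1, …, M q` (each of size at
least `q`) of a finite set whose union is the whole set, for every `j ≤ q`
the number of assignments for which exactly `j` of the monomials
`∏_{r ∈ M i} x r` equal `1` is congruent to `(−1)^(q−j)·C(q,j)` mod `2^q`. -/
theorem stmt4 {α : Type*} [Fintype α] [DecidableEq α] (q : ℕ) (hq : 1 ≤ q)
    (M : Fin q → Finset α)
    (hdisj : ∀ i j : Fin q, i ≠ j → Disjoint (M i) (M j))
    (hne : ∀ i, (M i).Nonempty)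
    (hcard : ∀ i, q ≤ (M i).card)
    (hcover : Finset.univ.biUnion M = Finset.univ)
    (j : ℕ) (hj : j ≤ q) :
    ((Finset.univ.filter fun x : α → ZMod 2 =>
        (Finset.univ.filter fun i : Fin q => ∏ r ∈ M i, x r = 1).card = j).card : ℤ)
      ≡ (-1) ^ (q - j) * (q.choose j : ℤ) [ZMOD (2 ^ q)] := by
  classical
  have hsplit : (Finset.univ.filter fun x : α → ZMod 2 =>
        (Finset.univ.filter fun i : Fin q => (∏ r ∈ M i, x r) = 1).card = j)
      = (Finset.powersetCard j (Finset.univ : Finset (Fin q))).biUnion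
          (fun T => Finset.univ.filter
            (fun x : α → ZMod 2 =>
              (Finset.univ.filter fun i : Fin q => (∏ r ∈ M i, x r) = 1) = T)) := by
    ext x
    simp only [mem_filter, mem_univ, true_and, mem_biUnion, mem_powersetCard]
    constructor
    · intro h; exact ⟨_, ⟨subset_univ _, h⟩, rfl⟩
    · rintro ⟨T, ⟨_, hT⟩, rfl⟩; exact hT
  have hpd : ∀ T₁ ∈ Finset.powersetCard j (Finset.univ : Finset (Fin q)),
      ∀ T₂ ∈ Finset.powersetCard j (Finset.univ : Finset (Fin q)), T₁ ≠ T₂ →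
      Disjoint (Finset.univ.filter
            (fun x : α → ZMod 2 =>
              (Finset.univ.filter fun i : Fin q => (∏ r ∈ M i, x r) = 1) = T₁))
        (Finset.univ.filter
            (fun x : α → ZMod 2 =>
              (Finset.univ.filter fun i : Fin q => (∏ r ∈ M i, x r) = 1) = T₂)) := by
    intro T₁ _ T₂ _ hne'
    rw [Finset.disjoint_left]
    intro x h1 h2
    rw [mem_filter] at h1 h2
    exact hne' (h1.2 ▸ h2.2)
  rw [hsplit, Finset.card_biUnion hpd]
  have hfib : ∀ T ∈ Finset.powersetCard j (Finset.univ : Finset (Fin q)),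
      (Finset.univ.filter
        (fun x : α → ZMod 2 =>
          (Finset.univ.filter fun i : Fin q => (∏ r ∈ M i, x r) = 1) = T)).card
      = ∏ i, (if i ∈ T then 1 else 2 ^ (M i).card - 1) :=
    fun T _ => fiber_card q M hdisj hcover T
  rw [Finset.sum_congr rfl hfib]
  have hmod : ((2 ^ q : ℕ) : ℤ) = 2 ^ q := by push_cast; ring
  rw [← hmod, ← ZMod.intCast_eq_intCast_iff]
  have hcast1 : ∀ i : Fin q, ((2 ^ (M i).card - 1 : ℕ) : ℤ) = 2 ^ (M i).card - 1 :=
    fun i => by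
      rw [Nat.cast_sub (Nat.one_le_two_pow)]; push_cast; ring
  push_cast [hcast1, apply_ite (fun n : ℕ => (n : ℤ)), apply_ite (fun n : ℤ => (n : ZMod (2 ^ q)))]
  haveI : NeZero (2 ^ q) := ⟨pow_ne_zero _ two_ne_zero⟩
  have hzero : ∀ i : Fin q, (2 : ZMod (2 ^ q)) ^ (M i).card = 0 := by
    intro i
    have hd : 2 ^ q ∣ 2 ^ (M i).card := pow_dvd_pow 2 (hcard i)
    have h := (ZMod.natCast_eq_zero_iff (2 ^ (M i).card) (2 ^ q)).mpr hd
    push_cast at h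
    exact h
  have hterm : ∀ T ∈ Finset.powersetCard j (Finset.univ : Finset (Fin q)),
      (∏ i : Fin q, if i ∈ T then (1 : ZMod (2 ^ q)) else 2 ^ (M i).card - 1)
        = (-1) ^ (q - j) := by
    intro T hT
    rw [Finset.mem_powersetCard] at hT
    have h1 : ∀ i : Fin q, (if i ∈ T then (1 : ZMod (2 ^ q)) else 2 ^ (M i).card - 1)
        = (if i ∈ T then 1 else -1) := by
      intro i
      by_cases h : i ∈ T
      · simp [h]
      · simp only [h, if_false]
        rw [hzero i]; ring
    rw [Finset.prod_congr rfl (fun i _ => h1 i), Finset.prod_ite,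
      Finset.prod_const, Finset.prod_const, one_pow, one_mul]
    congr 1
    have h2 : Finset.univ.filter (fun i : Fin q => i ∉ T) = Tᶜ := by
      ext i; simp
    rw [h2, Finset.card_compl, hT.2]
    simp
  rw [Finset.sum_congr rfl hterm, Finset.sum_const, Finset.card_powersetCard,
    Finset.card_univ, Fintype.card_fin, nsmul_eq_mul]
  push_cast
  ring
end

section
/- Let n be an even positive integer and define f_2: {0,1}^n → {0,1} by f_2(x) = (∏_{i=1}^{⌊3n/4⌋} x_i) ⊕ (∏_{j=n/2+1}^{n} x_j), where ⊕ is addition mod 2. Then every T-query quantum algorithm (with any number m of work qubits) that computes f_2 exactly satisfies T ≥ ⌊3n/4⌋. -/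
open Matrix

/-- Index type for the Hilbert space `ℂ^{n+1} ⊗ (ℂ²)^{⊗ m}`:
a query-register basis index in `Fin (n+1)` together with the
computational-basis values of `m` work qubits. -/
abbrev QIdx (n m : ℕ) : Type := Fin (n + 1) × (Fin m → ZMod 2)

/-- The phase oracle `O_x ⊗ I`: `e_0 ↦ e_0` and `e_i ↦ (−1)^{x_i} e_i`
for `1 ≤ i ≤ n`, acting as identity on the work qubits. -/
noncomputable def oracleMat (n m : ℕ) (x : Fin n → ZMod 2) :
    Matrix (QIdx n m) (QIdx n m) ℂ :=
  Matrix.diagonal fun p =>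
    if h : (p.1 : ℕ) = 0 then 1
    else (-1 : ℂ) ^ (x ⟨(p.1 : ℕ) - 1, by have := p.1.isLt; omega⟩).val

/-- The total evolution `U_T (O_x⊗I) U_{T−1} (O_x⊗I) ⋯ U_1 (O_x⊗I) U_0`
of a `T`-query algorithm. -/
noncomputable def algMat (n m : ℕ) (x : Fin n → ZMod 2) :
    (T : ℕ) → (Fin (T + 1) → Matrix (QIdx n m) (QIdx n m) ℂ) →
      Matrix (QIdx n m) (QIdx n m) ℂ
  | 0, U => U 0
  | T + 1, U => U (Fin.last (T + 1)) * oracleMat n m x *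
      algMat n m x T fun i => U i.castSucc

/-- The initial state `e_0 ⊗ e_0^{⊗ m}`. -/
noncomputable def initVec (n m : ℕ) : QIdx n m → ℂ :=
  fun p => if p = ((0 : Fin (n + 1)), fun _ => (0 : ZMod 2)) then 1 else 0

/-- The final state `ψ_x` of the algorithm on input `x`. -/
noncomputable def finalState (n m T : ℕ)
    (U : Fin (T + 1) → Matrix (QIdx n m) (QIdx n m) ℂ)
    (x : Fin n → ZMod 2) : QIdx n m → ℂ :=
  (algMat n m x T U).mulVec (initVec n m)

/-- There is a `T`-query exact quantum algorithm with `m` work qubits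
computing `f`: unitaries `U_0, …, U_T` and an orthogonal projection `Π`
with `Π ψ_x = ψ_x` when `f x = 1` and `Π ψ_x = 0` when `f x = 0`. -/
def ComputesExactly (n m T : ℕ) (f : (Fin n → ZMod 2) → ZMod 2) : Prop :=
  ∃ U : Fin (T + 1) → Matrix (QIdx n m) (QIdx n m) ℂ,
    (∀ i, U i ∈ Matrix.unitaryGroup (QIdx n m) ℂ) ∧
    ∃ P : Matrix (QIdx n m) (QIdx n m) ℂ,
      P.IsHermitian ∧ P * P = P ∧
        ∀ x : Fin n → ZMod 2,
          (f x = 1 → P.mulVec (finalState n m T U x) = finalState n m T U x) ∧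
          (f x = 0 → P.mulVec (finalState n m T U x) = 0)

namespace Stmt7Aux

noncomputable def chi {n : ℕ} (S : Finset (Fin n)) : (Fin n → ZMod 2) → ℂ :=
  fun x => ∏ i ∈ S, (-1 : ℂ) ^ (x i).val

noncomputable def lowDeg (n T : ℕ) : Submodule ℂ ((Fin n → ZMod 2) → ℂ) :=
  Submodule.span ℂ {g | ∃ S : Finset (Fin n), S.card ≤ T ∧ g = chi S}

lemma chi_mem {n T : ℕ} {S : Finset (Fin n)} (h : S.card ≤ T) : chi S ∈ lowDeg n T :=
  Submodule.subset_span ⟨S, h, rfl⟩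

lemma sq_factor {n : ℕ} (x : Fin n → ZMod 2) (i : Fin n) :
    (-1 : ℂ) ^ (x i).val * (-1 : ℂ) ^ (x i).val = 1 := by
  rw [← pow_add, ← two_mul, pow_mul, neg_one_sq, one_pow]

lemma chi_mul {n : ℕ} (S S' : Finset (Fin n)) (x : Fin n → ZMod 2) :
    chi S x * chi S' x = chi ((S ∪ S') \ (S ∩ S')) x := by
  unfold chi
  have h1 := Finset.prod_union_inter (s₁ := S) (s₂ := S')
      (f := fun i => (-1 : ℂ) ^ (x i).val)
  have h2 := Finset.prod_sdiff (f := fun i => (-1 : ℂ) ^ (x i).val)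
      (Finset.inter_subset_union : S ∩ S' ⊆ S ∪ S')
  have h3 : (∏ i ∈ S ∩ S', (-1 : ℂ) ^ (x i).val) * ∏ i ∈ S ∩ S', (-1 : ℂ) ^ (x i).val = 1 := by
    rw [← Finset.prod_mul_distrib]
    exact Finset.prod_eq_one fun i _ => sq_factor x i
  calc (∏ i ∈ S, (-1:ℂ) ^ (x i).val) * ∏ i ∈ S', (-1:ℂ) ^ (x i).val
      = (∏ i ∈ S ∪ S', (-1:ℂ) ^ (x i).val) * ∏ i ∈ S ∩ S', (-1:ℂ) ^ (x i).val := h1.symm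
    _ = ((∏ i ∈ (S ∪ S') \ (S ∩ S'), (-1:ℂ) ^ (x i).val) * ∏ i ∈ S ∩ S', (-1:ℂ) ^ (x i).val)
          * ∏ i ∈ S ∩ S', (-1:ℂ) ^ (x i).val := by rw [h2]
    _ = (∏ i ∈ (S ∪ S') \ (S ∩ S'), (-1:ℂ) ^ (x i).val) *
          ((∏ i ∈ S ∩ S', (-1:ℂ) ^ (x i).val) * ∏ i ∈ S ∩ S', (-1:ℂ) ^ (x i).val) := by ring
    _ = ∏ i ∈ (S ∪ S') \ (S ∩ S'), (-1:ℂ) ^ (x i).val := by rw [h3, mul_one]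

lemma mul_mem_lowDeg {n a b : ℕ} {g h : (Fin n → ZMod 2) → ℂ}
    (hg : g ∈ lowDeg n a) (hh : h ∈ lowDeg n b) :
    (fun x => g x * h x) ∈ lowDeg n (a + b) := by
  induction hg using Submodule.span_induction with
  | mem g hg =>
    obtain ⟨S, hS, rfl⟩ := hg
    induction hh using Submodule.span_induction with
    | mem h hh =>
      obtain ⟨S', hS', rfl⟩ := hh
      have : (fun x => chi S x * chi S' x) = chi ((S ∪ S') \ (S ∩ S')) := by
        funext x; exact chi_mul S S' x
      rw [this]
      exact chi_mem (le_trans (Finset.card_le_card (Finset.sdiff_subset))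
        (le_trans (Finset.card_union_le _ _) (Nat.add_le_add hS hS')))
    | zero =>
      have h0 : (fun x => chi S x * (0 : (Fin n → ZMod 2) → ℂ) x) = 0 := by funext x; simp
      rw [h0]; exact Submodule.zero_mem _
    | add h1 h2 _ _ ih1 ih2 =>
      have : (fun x => chi S x * (h1 + h2) x) =
          (fun x => chi S x * h1 x) + fun x => chi S x * h2 x := by
        funext x; simp [mul_add]
      rw [this]; exact Submodule.add_mem _ ih1 ih2
    | smul c h1 _ ih =>
      have : (fun x => chi S x * (c • h1) x) = c • fun x => chi S x * h1 x := by
        funext x; simp [Pi.smul_apply, smul_eq_mul]; ring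
      rw [this]; exact Submodule.smul_mem _ _ ih
  | zero =>
    have h0 : (fun x => (0 : (Fin n → ZMod 2) → ℂ) x * h x) = 0 := by funext x; simp
    rw [h0]; exact Submodule.zero_mem _
  | add g1 g2 _ _ ih1 ih2 =>
    have : (fun x => (g1 + g2) x * h x) =
        (fun x => g1 x * h x) + fun x => g2 x * h x := by
      funext x; simp [add_mul]
    rw [this]; exact Submodule.add_mem _ ih1 ih2
  | smul c g1 _ ih =>
    have : (fun x => (c • g1) x * h x) = c • fun x => g1 x * h x := by
      funext x; simp [Pi.smul_apply, smul_eq_mul]; ring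
    rw [this]; exact Submodule.smul_mem _ _ ih

lemma const_mem_lowDeg {n T : ℕ} (c : ℂ) : (fun _ : Fin n → ZMod 2 => c) ∈ lowDeg n T := by
  have : (fun _ : Fin n → ZMod 2 => c) = c • chi (∅ : Finset (Fin n)) := by
    funext x; simp [chi]
  rw [this]
  exact Submodule.smul_mem _ _ (chi_mem (by simp))

lemma mul_entry_mem {n m a b : ℕ}
    {M N : (Fin n → ZMod 2) → Matrix (QIdx n m) (QIdx n m) ℂ}
    (hM : ∀ p q, (fun x => M x p q) ∈ lowDeg n a)
    (hN : ∀ p q, (fun x => N x p q) ∈ lowDeg n b) (p q : QIdx n m) :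
    (fun x => (M x * N x) p q) ∈ lowDeg n (a + b) := by
  have h : (fun x => (M x * N x) p q) =
      ∑ r : QIdx n m, fun x => M x p r * N x r q := by
    funext x
    rw [Finset.sum_apply]
    simp [Matrix.mul_apply]
  rw [h]
  exact Submodule.sum_mem _ fun r _ => mul_mem_lowDeg (hM p r) (hN r q)

lemma oracle_entry_mem {n m : ℕ} (p q : QIdx n m) :
    (fun x => oracleMat n m x p q) ∈ lowDeg n 1 := by
  by_cases hpq : p = q
  · subst hpq
    by_cases h0 : (p.1 : ℕ) = 0
    · have : (fun x => oracleMat n m x p p) = fun _ => (1:ℂ) := by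
        funext x; simp [oracleMat, Matrix.diagonal_apply_eq, h0, show p.1 = 0 by simpa using h0]
      rw [this]; exact const_mem_lowDeg 1
    · have : (fun x => oracleMat n m x p p) =
          chi ({⟨(p.1 : ℕ) - 1, by have := p.1.isLt; omega⟩} : Finset (Fin n)) := by
        funext x; simp [oracleMat, Matrix.diagonal_apply_eq, h0, chi, show ¬ p.1 = 0 by simpa using h0]
      rw [this]; exact chi_mem (by simp)
  · have : (fun x => oracleMat n m x p q) = fun _ => (0:ℂ) := by
      funext x; simp [oracleMat, Matrix.diagonal_apply_ne _ hpq]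
    rw [this]; exact const_mem_lowDeg 0

lemma lowDeg_mono {n : ℕ} {T T' : ℕ} (h : T ≤ T') : lowDeg n T ≤ lowDeg n T' := by
  apply Submodule.span_mono
  rintro g ⟨S, hS, rfl⟩
  exact ⟨S, le_trans hS h, rfl⟩

lemma algMat_entry_mem {n m : ℕ} :
    ∀ (T : ℕ) (U : Fin (T + 1) → Matrix (QIdx n m) (QIdx n m) ℂ) (p q : QIdx n m),
      (fun x => algMat n m x T U p q) ∈ lowDeg n T := by
  intro T
  induction T with
  | zero => intro U p q; exact const_mem_lowDeg _
  | succ T ih =>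
    intro U p q
    have h1 : ∀ p q : QIdx n m,
        (fun x => (U (Fin.last (T+1)) * oracleMat n m x) p q) ∈ lowDeg n 1 := by
      intro p q
      have := mul_entry_mem (n := n) (m := m) (a := 0) (b := 1)
        (M := fun _ => U (Fin.last (T+1))) (N := fun x => oracleMat n m x)
        (fun p q => const_mem_lowDeg _) oracle_entry_mem p q
      simpa using this
    have h2 := mul_entry_mem (n := n) (m := m) (a := 1) (b := T)
      (M := fun x => U (Fin.last (T+1)) * oracleMat n m x)
      (N := fun x => algMat n m x T fun i => U i.castSucc)
      h1 (fun p q => ih _ p q) p q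
    have : (fun x => algMat n m x (T+1) U p q) =
        fun x => ((U (Fin.last (T+1)) * oracleMat n m x) *
          algMat n m x T fun i => U i.castSucc) p q := by
      funext x; rw [algMat]
    rw [this]
    exact lowDeg_mono (by omega) h2

lemma oracle_unitary {n m : ℕ} (x : Fin n → ZMod 2) :
    oracleMat n m x ∈ Matrix.unitaryGroup (QIdx n m) ℂ := by
  rw [Matrix.mem_unitaryGroup_iff]
  unfold oracleMat
  rw [Matrix.star_eq_conjTranspose, Matrix.diagonal_conjTranspose,
    Matrix.diagonal_mul_diagonal, ← Matrix.diagonal_one]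
  refine congrArg Matrix.diagonal (funext fun p => ?_)
  rw [Pi.star_apply]
  by_cases h0 : (p.1 : ℕ) = 0
  · simp [h0]
  · rw [dif_neg h0, star_pow, star_neg, star_one,
      ← pow_add, ← two_mul, pow_mul, neg_one_sq, one_pow]

lemma algMat_unitary {n m : ℕ} (x : Fin n → ZMod 2) :
    ∀ (T : ℕ) (U : Fin (T + 1) → Matrix (QIdx n m) (QIdx n m) ℂ),
      (∀ i, U i ∈ Matrix.unitaryGroup (QIdx n m) ℂ) →
      algMat n m x T U ∈ Matrix.unitaryGroup (QIdx n m) ℂ := by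
  intro T
  induction T with
  | zero => intro U hU; exact hU 0
  | succ T ih =>
    intro U hU
    rw [algMat]
    exact mul_mem (mul_mem (hU _) (oracle_unitary x)) (ih _ fun i => hU _)

lemma unitary_mulVec_ne_zero {N : Type*} [Fintype N] [DecidableEq N]
    {A : Matrix N N ℂ} (hA : A ∈ Matrix.unitaryGroup N ℂ) {v : N → ℂ} (hv : v ≠ 0) :
    A.mulVec v ≠ 0 := by
  intro h
  apply hv
  have h1 : star A * A = 1 := (Unitary.mem_iff.mp hA).1
  calc v = (1 : Matrix N N ℂ).mulVec v := by rw [Matrix.one_mulVec]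
    _ = (star A * A).mulVec v := by rw [h1]
    _ = (star A).mulVec (A.mulVec v) := (Matrix.mulVec_mulVec _ _ _).symm
    _ = 0 := by rw [h, Matrix.mulVec_zero]

lemma initVec_ne_zero {n m : ℕ} : initVec n m ≠ 0 := by
  intro h
  have := congrFun h ((0 : Fin (n + 1)), fun _ => (0 : ZMod 2))
  simp [initVec] at this

lemma finalState_mem {n m T : ℕ}
    (U : Fin (T + 1) → Matrix (QIdx n m) (QIdx n m) ℂ)
    (P : Matrix (QIdx n m) (QIdx n m) ℂ) (k0 : QIdx n m) :
    (fun x => P.mulVec (finalState n m T U x) k0) ∈ lowDeg n T := by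
  have h : (fun x => P.mulVec (finalState n m T U x) k0) =
      ∑ q : QIdx n m, fun x => (P * algMat n m x T U) k0 q * initVec n m q := by
    funext x
    rw [Finset.sum_apply]
    unfold finalState
    rw [Matrix.mulVec_mulVec, Matrix.mulVec]
    rfl
  rw [h]
  apply Submodule.sum_mem
  intro q _
  have h1 : ∀ p q : QIdx n m, (fun x => (P * algMat n m x T U) p q) ∈ lowDeg n T := by
    intro p q
    have := mul_entry_mem (n := n) (m := m) (a := 0) (b := T)
      (M := fun _ => P) (N := fun x => algMat n m x T U)
      (fun p q => const_mem_lowDeg _) (fun p q => algMat_entry_mem T U p q) p q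
    simpa using this
  have h2 := mul_mem_lowDeg (h1 k0 q) (const_mem_lowDeg (n := n) (T := 0) (initVec n m q))
  simpa using h2

noncomputable def Wfun (n k : ℕ) (xs : Fin n → ZMod 2) : (Fin n → ZMod 2) → ℂ :=
  fun x => (if ∀ i : Fin n, k ≤ (i : ℕ) → x i = xs i then (1:ℂ) else 0) *
    ∏ i ∈ Finset.univ.filter (fun i : Fin n => (i : ℕ) < k), (-1:ℂ) ^ (x i).val

lemma add_one_add_one (a : ZMod 2) : a + 1 + 1 = a := by revert a; decide

lemma sign_flip (a : ZMod 2) : (-1:ℂ) ^ ((a + 1).val) = -(-1:ℂ) ^ (a.val) := by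
  fin_cases a
  · show (-1:ℂ) ^ ((0:ZMod 2) + 1).val = -(-1:ℂ) ^ (ZMod.val (0:ZMod 2))
    norm_num [show (0:ZMod 2) + 1 = 1 by decide, show ZMod.val (1 : ZMod 2) = 1 by decide, show ZMod.val (0 : ZMod 2) = 0 by decide]
  · show (-1:ℂ) ^ ((1:ZMod 2) + 1).val = -(-1:ℂ) ^ (ZMod.val (1:ZMod 2))
    norm_num [show (1:ZMod 2) + 1 = 0 by decide, show ZMod.val (0 : ZMod 2) = 0 by decide, show ZMod.val (2 : ZMod 2) = 0 by decide, show ZMod.val (1 : ZMod 2) = 1 by decide]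

def flipEquiv {n : ℕ} (i0 : Fin n) : (Fin n → ZMod 2) ≃ (Fin n → ZMod 2) where
  toFun x := Function.update x i0 (x i0 + 1)
  invFun x := Function.update x i0 (x i0 + 1)
  left_inv x := by
    funext i
    by_cases h : i = i0
    · subst h; simp [Function.update_self, add_one_add_one]
    · simp [Function.update_of_ne h]
  right_inv x := by
    funext i
    by_cases h : i = i0
    · subst h; simp [Function.update_self, add_one_add_one]
    · simp [Function.update_of_ne h]

lemma gen_sum_zero {n k : ℕ} (xs : Fin n → ZMod 2) (S : Finset (Fin n))
    (i0 : Fin n) (hi0k : (i0 : ℕ) < k) (hi0S : i0 ∉ S) :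
    ∑ x : Fin n → ZMod 2, chi S x * Wfun n k xs x = 0 := by
  set F : (Fin n → ZMod 2) → ℂ := fun x => chi S x * Wfun n k xs x with hF
  have hi0A : i0 ∈ Finset.univ.filter (fun i : Fin n => (i : ℕ) < k) := by
    simp [hi0k]
  have hflip : ∀ x, F (flipEquiv i0 x) = - F x := by
    intro x
    set y : Fin n → ZMod 2 := Function.update x i0 (x i0 + 1) with hy
    have hyy : flipEquiv i0 x = y := rfl
    have h1 : chi S y = chi S x := by
      unfold chi
      refine Finset.prod_congr rfl fun i hi => ?_
      rw [hy, Function.update_of_ne (ne_of_mem_of_not_mem hi hi0S)]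
    have h2 : (∀ i : Fin n, k ≤ (i : ℕ) → y i = xs i) ↔
        (∀ i : Fin n, k ≤ (i : ℕ) → x i = xs i) := by
      constructor
      · intro h i hik
        have hne : i ≠ i0 := by intro he; subst he; omega
        have := h i hik
        rwa [hy, Function.update_of_ne hne] at this
      · intro h i hik
        have hne : i ≠ i0 := by intro he; subst he; omega
        rw [hy, Function.update_of_ne hne]
        exact h i hik
    have h3 : ∏ i ∈ Finset.univ.filter (fun i : Fin n => (i : ℕ) < k), (-1:ℂ) ^ (y i).val
        = - ∏ i ∈ Finset.univ.filter (fun i : Fin n => (i : ℕ) < k), (-1:ℂ) ^ (x i).val := by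
      rw [← Finset.mul_prod_erase _ _ hi0A, ← Finset.mul_prod_erase _ _ hi0A]
      have hy0 : y i0 = x i0 + 1 := by rw [hy, Function.update_self]
      have herase : ∏ i ∈ (Finset.univ.filter (fun i : Fin n => (i : ℕ) < k)).erase i0,
          (-1:ℂ) ^ (y i).val =
          ∏ i ∈ (Finset.univ.filter (fun i : Fin n => (i : ℕ) < k)).erase i0,
          (-1:ℂ) ^ (x i).val := by
        refine Finset.prod_congr rfl fun i hi => ?_
        rw [hy, Function.update_of_ne (Finset.ne_of_mem_erase hi)]
      rw [herase, hy0, sign_flip]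
      ring
    rw [hyy, hF]
    simp only
    unfold Wfun
    rw [h1, h3, if_congr h2 rfl rfl]
    ring
  have h := Equiv.sum_comp (flipEquiv i0) F
  have h2 : ∑ x : Fin n → ZMod 2, F (flipEquiv i0 x) = - ∑ x : Fin n → ZMod 2, F x := by
    rw [← Finset.sum_neg_distrib]
    exact Finset.sum_congr rfl fun x _ => hflip x
  have h3 : - ∑ x : Fin n → ZMod 2, F x = ∑ x : Fin n → ZMod 2, F x := h2.symm.trans h
  have h4 : (2:ℂ) * ∑ x : Fin n → ZMod 2, F x = 0 := by linear_combination - h3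
  have := mul_eq_zero.mp h4
  simpa using this

lemma card_filter_lt {n k : ℕ} (hk : k ≤ n) :
    (Finset.univ.filter (fun i : Fin n => (i : ℕ) < k)).card = k := by
  have he : Finset.univ.filter (fun i : Fin n => (i : ℕ) < k) =
      Finset.attachFin (Finset.range k)
        (fun m hm => lt_of_lt_of_le (Finset.mem_range.mp hm) hk) := by
    ext i
    simp [Finset.mem_attachFin]
  rw [he, Finset.card_attachFin, Finset.card_range]

lemma exists_i0 {n k T : ℕ} (hk : k ≤ n) (S : Finset (Fin n)) (hS : S.card ≤ T)
    (hT : T < k) : ∃ i0 : Fin n, (i0 : ℕ) < k ∧ i0 ∉ S := by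
  by_contra hcon
  push_neg at hcon
  have hsub : Finset.univ.filter (fun i : Fin n => (i : ℕ) < k) ⊆ S := by
    intro i hi
    exact hcon i (Finset.mem_filter.mp hi).2
  have := Finset.card_le_card hsub
  rw [card_filter_lt hk] at this
  omega

lemma span_sum_zero {n T k : ℕ} (xs : Fin n → ZMod 2) (hT : T < k) (hk : k ≤ n)
    {g : (Fin n → ZMod 2) → ℂ} (hg : g ∈ lowDeg n T) :
    ∑ x : Fin n → ZMod 2, g x * Wfun n k xs x = 0 := by
  let L : ((Fin n → ZMod 2) → ℂ) →ₗ[ℂ] ℂ :=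
    { toFun := fun h => ∑ x : Fin n → ZMod 2, h x * Wfun n k xs x
      map_add' := by
        intro a b
        simp [add_mul, Finset.sum_add_distrib]
      map_smul' := by
        intro c a
        simp [smul_eq_mul, Finset.mul_sum, mul_assoc] }
  have hle : lowDeg n T ≤ LinearMap.ker L := by
    rw [lowDeg, Submodule.span_le]
    rintro g ⟨S, hS, rfl⟩
    obtain ⟨i0, hi0k, hi0S⟩ := exists_i0 hk S hS hT
    exact gen_sum_zero xs S i0 hi0k hi0S
  exact hle hg

lemma zmod2_ne_one {a : ZMod 2} (h : a ≠ 1) : a = 0 := by revert a; decide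

end Stmt7Aux

/-- For even `n`, every exact quantum algorithm computing
`f₂(x) = (∏_{i=1}^{⌊3n/4⌋} x_i) ⊕ (∏_{j=n/2+1}^{n} x_j)` makes at least
`⌊3n/4⌋` queries. -/
theorem stmt7 (n : ℕ) (hn : 0 < n) (heven : n % 2 = 0)
    (f : (Fin n → ZMod 2) → ZMod 2)
    (hf : ∀ x, f x =
        (∏ i ∈ Finset.univ.filter fun i : Fin n => (i : ℕ) < 3 * n / 4, x i)
          + ∏ i ∈ Finset.univ.filter fun i : Fin n => n / 2 ≤ (i : ℕ), x i) :
    ∀ m T : ℕ, ComputesExactly n m T f → 3 * n / 4 ≤ T := by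
  intro m T hC
  obtain ⟨U, hU, P, hHerm, hProj, hPsi⟩ := hC
  by_contra hT
  push_neg at hT
  have hn2 : 2 ≤ n := by omega
  have hkn : 3 * n / 4 < n := by omega
  have hk1 : 3 * n / 4 ≤ n - 1 := by omega
  set xs : Fin n → ZMod 2 := fun i => if (i : ℕ) = n - 1 then 0 else 1 with hxs
  have hxslt : ∀ i : Fin n, (i : ℕ) < n - 1 → xs i = 1 := by
    intro i hi
    simp only [hxs]
    rw [if_neg (by omega)]
  have hxslast : xs ⟨n - 1, by omega⟩ = 0 := by
    simp [hxs]
  have hlastmem2 : (⟨n - 1, by omega⟩ : Fin n) ∈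
      Finset.univ.filter fun i : Fin n => n / 2 ≤ (i : ℕ) := by
    rw [Finset.mem_filter]
    exact ⟨Finset.mem_univ _, by show n / 2 ≤ n - 1; omega⟩
  have hfxs : f xs = 1 := by
    rw [hf]
    have h1 : (∏ i ∈ Finset.univ.filter fun i : Fin n => (i : ℕ) < 3 * n / 4, xs i) = 1 := by
      refine Finset.prod_eq_one fun i hi => ?_
      have hik := (Finset.mem_filter.mp hi).2
      exact hxslt i (by omega)
    have h2 : (∏ i ∈ Finset.univ.filter fun i : Fin n => n / 2 ≤ (i : ℕ), xs i) = 0 :=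
      Finset.prod_eq_zero hlastmem2 hxslast
    rw [h1, h2, add_zero]
  have hAu : algMat n m xs T U ∈ Matrix.unitaryGroup (QIdx n m) ℂ :=
    Stmt7Aux.algMat_unitary xs T U hU
  have hpsi_ne : finalState n m T U xs ≠ 0 :=
    Stmt7Aux.unitary_mulVec_ne_zero hAu Stmt7Aux.initVec_ne_zero
  obtain ⟨k0, hk0⟩ : ∃ k0 : QIdx n m, finalState n m T U xs k0 ≠ 0 := by
    by_contra hc
    push_neg at hc
    exact hpsi_ne (funext hc)
  set g : (Fin n → ZMod 2) → ℂ := fun x => P.mulVec (finalState n m T U x) k0 with hg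
  have hgxs : g xs ≠ 0 := by
    simp only [hg]
    rw [(hPsi xs).1 hfxs]
    exact hk0
  have hgmem : g ∈ Stmt7Aux.lowDeg n T := Stmt7Aux.finalState_mem U P k0
  have hzero : ∀ x : Fin n → ZMod 2, x ≠ xs →
      (∀ i : Fin n, 3 * n / 4 ≤ (i : ℕ) → x i = xs i) → g x = 0 := by
    intro x hxne hfix
    obtain ⟨i1, hi1⟩ : ∃ i1 : Fin n, x i1 ≠ xs i1 := by
      by_contra hc
      push_neg at hc
      exact hxne (funext hc)
    have hi1k : (i1 : ℕ) < 3 * n / 4 := by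
      by_contra hge
      push_neg at hge
      exact hi1 (hfix i1 hge)
    have hx0 : x i1 = 0 := by
      apply Stmt7Aux.zmod2_ne_one
      rw [← hxslt i1 (by omega)]
      exact hi1
    have hfx : f x = 0 := by
      rw [hf]
      have hi1mem : i1 ∈ Finset.univ.filter fun i : Fin n => (i : ℕ) < 3 * n / 4 := by
        rw [Finset.mem_filter]
        exact ⟨Finset.mem_univ _, hi1k⟩
      have h1 : (∏ i ∈ Finset.univ.filter fun i : Fin n => (i : ℕ) < 3 * n / 4, x i) = 0 :=
        Finset.prod_eq_zero hi1mem hx0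
      have h2 : (∏ i ∈ Finset.univ.filter fun i : Fin n => n / 2 ≤ (i : ℕ), x i) = 0 := by
        refine Finset.prod_eq_zero hlastmem2 ?_
        rw [hfix ⟨n - 1, by omega⟩ (by show 3 * n / 4 ≤ n - 1; omega)]
        exact hxslast
      rw [h1, h2, add_zero]
    simp only [hg]
    rw [(hPsi x).2 hfx]
    rfl
  have hsum1 : ∑ x : Fin n → ZMod 2, g x * Stmt7Aux.Wfun n (3 * n / 4) xs x =
      g xs * Stmt7Aux.Wfun n (3 * n / 4) xs xs := by
    refine Finset.sum_eq_single_of_mem xs (Finset.mem_univ xs) ?_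
    intro x _ hxne
    by_cases hcond : ∀ i : Fin n, 3 * n / 4 ≤ (i : ℕ) → x i = xs i
    · rw [hzero x hxne hcond, zero_mul]
    · have hW0 : Stmt7Aux.Wfun n (3 * n / 4) xs x = 0 := by
        unfold Stmt7Aux.Wfun
        rw [if_neg hcond, zero_mul]
      rw [hW0, mul_zero]
  have hWne : Stmt7Aux.Wfun n (3 * n / 4) xs xs ≠ 0 := by
    unfold Stmt7Aux.Wfun
    rw [if_pos (fun i _ => rfl), one_mul]
    refine Finset.prod_ne_zero_iff.mpr fun i _ => ?_
    exact pow_ne_zero _ (by norm_num)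
  have hsum0 := Stmt7Aux.span_sum_zero xs hT (le_of_lt hkn) hgmem
  rw [hsum1] at hsum0
  exact mul_ne_zero hgxs hWne hsum0
end

section
/- Let n be an even positive integer, let t be an integer with 1 ≤ t ≤ ⌊n/4⌋, and let S_1,…,S_t be a partition of {⌊3n/4⌋+1,…,n} into sets each of size at least t+1. Define f: {0,1}^n → {0,1} by f(x) = ((∏_{i=1}^{n/2} x_i) ⊕ (⊕_{r=1}^{t} ∏_{j∈S_r} x_j)) · ∏_{j=n/2+1}^{⌊3n/4⌋} x_j, where ⊕ is addition mod 2. Then every T-query quantum algorithm (with any number m of work qubits) that computes f exactly satisfies T ≥ ⌊3n/4⌋. -/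
open Matrix
open scoped symmDiff

namespace Stmt9Aux

noncomputable def chi {n : ℕ} (A : Finset (Fin n)) (x : Fin n → ZMod 2) : ℂ :=
  ∏ i ∈ A, (-1 : ℂ) ^ (x i).val

lemma chi_ne_zero {n : ℕ} (A : Finset (Fin n)) (x : Fin n → ZMod 2) : chi A x ≠ 0 := by
  refine Finset.prod_ne_zero_iff.2 fun i _ => ?_
  exact pow_ne_zero _ (by norm_num)

lemma neg_one_pow_add_one (v : ZMod 2) :
    (-1 : ℂ) ^ ((v + 1 : ZMod 2)).val = -(-1 : ℂ) ^ v.val := by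
  fin_cases v
  · exact (by norm_num : (-1 : ℂ) ^ 1 = -(-1 : ℂ) ^ 0)
  · exact (by norm_num : (-1 : ℂ) ^ 0 = -(-1 : ℂ) ^ 1)

lemma neg_one_pow_sq (k : ℕ) : (-1 : ℂ) ^ k * (-1 : ℂ) ^ k = 1 := by
  rw [← pow_add, ← two_mul, pow_mul]; norm_num

def DegLE (n d : ℕ) (g : (Fin n → ZMod 2) → ℂ) : Prop :=
  ∃ c : Finset (Fin n) → ℂ, (∀ A, d < A.card → c A = 0) ∧
    ∀ x, g x = ∑ A : Finset (Fin n), c A * chi A x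

lemma degLE_const (n d : ℕ) (k : ℂ) : DegLE n d (fun _ => k) := by
  refine ⟨fun A => if A = ∅ then k else 0, ?_, ?_⟩
  · intro A hA
    show (if A = ∅ then k else 0) = 0
    rw [if_neg]; rintro rfl; simp at hA
  · intro x
    rw [Fintype.sum_eq_single (∅ : Finset (Fin n))]
    · simp [chi]
    · intro A hA; simp [hA]

lemma degLE_mono {n d d' : ℕ} {g} (h : d ≤ d') (hg : DegLE n d g) : DegLE n d' g := by
  obtain ⟨c, hc0, hc⟩ := hg
  exact ⟨c, fun A hA => hc0 A (lt_of_le_of_lt h hA), hc⟩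

lemma degLE_sum {n d : ℕ} {ι : Type*} [Fintype ι] (a : ι → ℂ)
    (g : ι → (Fin n → ZMod 2) → ℂ) (h : ∀ p, DegLE n d (g p)) :
    DegLE n d (fun x => ∑ p, a p * g p x) := by
  choose c hc0 hc using h
  refine ⟨fun A => ∑ p, a p * c p A, ?_, ?_⟩
  · intro A hA; simp [fun p => hc0 p A hA]
  · intro x
    simp only [hc, Finset.mul_sum, Finset.sum_mul]
    rw [Finset.sum_comm]
    exact Finset.sum_congr rfl fun A _ => Finset.sum_congr rfl fun p _ => by ring

lemma symmDiff_singleton_mem {n : ℕ} {A : Finset (Fin n)} {i : Fin n} (hi : i ∈ A) :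
    A ∆ {i} = A.erase i := by
  ext j
  simp only [Finset.mem_symmDiff, Finset.mem_singleton, Finset.mem_erase]
  constructor
  · rintro (⟨hj, hji⟩ | ⟨rfl, hj⟩)
    · exact ⟨hji, hj⟩
    · exact absurd hi hj
  · rintro ⟨hji, hj⟩; exact Or.inl ⟨hj, hji⟩

lemma symmDiff_singleton_not_mem {n : ℕ} {A : Finset (Fin n)} {i : Fin n} (hi : i ∉ A) :
    A ∆ {i} = insert i A := by
  ext j
  simp only [Finset.mem_symmDiff, Finset.mem_singleton, Finset.mem_insert]
  constructor
  · rintro (⟨hj, _⟩ | ⟨rfl, _⟩)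
    · exact Or.inr hj
    · exact Or.inl rfl
  · rintro (rfl | hj)
    · exact Or.inr ⟨rfl, hi⟩
    · exact Or.inl ⟨hj, fun h => hi (h ▸ hj)⟩

lemma chi_symmDiff {n : ℕ} (A : Finset (Fin n)) (i : Fin n) (x : Fin n → ZMod 2) :
    chi (A ∆ {i}) x = (-1 : ℂ) ^ (x i).val * chi A x := by
  by_cases hi : i ∈ A
  · rw [symmDiff_singleton_mem hi, chi, chi, ← Finset.mul_prod_erase _ _ hi, ← mul_assoc,
      neg_one_pow_sq, one_mul]
  · rw [symmDiff_singleton_not_mem hi, chi, chi, Finset.prod_insert hi]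

lemma card_symmDiff_singleton {n : ℕ} (A : Finset (Fin n)) (i : Fin n) :
    A.card ≤ (A ∆ {i}).card + 1 := by
  by_cases hi : i ∈ A
  · rw [symmDiff_singleton_mem hi, Finset.card_erase_of_mem hi]
    have := Finset.card_pos.2 ⟨i, hi⟩
    omega
  · rw [symmDiff_singleton_not_mem hi, Finset.card_insert_of_notMem hi]
    omega

lemma degLE_oracle {n d : ℕ} {g} (i : Fin n) (h : DegLE n d g) :
    DegLE n (d + 1) (fun x => (-1 : ℂ) ^ (x i).val * g x) := by
  obtain ⟨c, hc0, hc⟩ := h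
  refine ⟨fun A => c (A ∆ {i}), ?_, ?_⟩
  · intro A hA
    apply hc0
    have := card_symmDiff_singleton A i
    omega
  · intro x
    show (-1 : ℂ) ^ (x i).val * g x = ∑ A : Finset (Fin n), c (A ∆ {i}) * chi A x
    rw [hc, Finset.mul_sum]
    refine Fintype.sum_equiv ⟨fun A => A ∆ {i}, fun A => A ∆ {i},
      fun A => symmDiff_symmDiff_cancel_right {i} A,
      fun A => symmDiff_symmDiff_cancel_right {i} A⟩ _ _ fun A => ?_
    simp only [Equiv.coe_fn_mk]
    rw [symmDiff_symmDiff_cancel_right {i} A, chi_symmDiff]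
    ring

end Stmt9Aux

namespace Stmt9Aux

lemma finalState_degLE (n m : ℕ) :
    ∀ (T : ℕ) (U : Fin (T + 1) → Matrix (QIdx n m) (QIdx n m) ℂ) (p : QIdx n m),
      DegLE n T (fun x => finalState n m T U x p) := by
  intro T
  induction T with
  | zero =>
    intro U p
    have : (fun x : Fin n → ZMod 2 => finalState n m 0 U x p)
        = fun _ => ((U 0).mulVec (initVec n m)) p := by
      funext x; simp [finalState, algMat]
    rw [this]
    exact degLE_const n 0 _
  | succ T ih =>
    intro U p
    have key : ∀ x : Fin n → ZMod 2, finalState n m (T + 1) U x p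
        = ∑ q : QIdx n m, U (Fin.last (T + 1)) p q *
            ((if h : (q.1 : ℕ) = 0 then (1 : ℂ)
              else (-1 : ℂ) ^ (x ⟨(q.1 : ℕ) - 1, by have := q.1.isLt; omega⟩).val) *
              finalState n m T (fun i => U i.castSucc) x q) := by
      intro x
      show (algMat n m x (T + 1) U).mulVec (initVec n m) p = _
      rw [show algMat n m x (T + 1) U = U (Fin.last (T + 1)) * oracleMat n m x *
        algMat n m x T (fun i => U i.castSucc) from rfl]
      rw [Matrix.mul_assoc, ← Matrix.mulVec_mulVec, ← Matrix.mulVec_mulVec]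
      rw [Matrix.mulVec, dotProduct]
      refine Finset.sum_congr rfl fun q _ => ?_
      congr 1
      rw [show (oracleMat n m x).mulVec (algMat n m x T (fun i => U i.castSucc) *ᵥ initVec n m) q
          = _ * _ from Matrix.mulVec_diagonal _ _ _]
      rfl
    have : (fun x : Fin n → ZMod 2 => finalState n m (T + 1) U x p)
        = fun x => ∑ q : QIdx n m, U (Fin.last (T + 1)) p q *
            ((if h : (q.1 : ℕ) = 0 then (1 : ℂ)
              else (-1 : ℂ) ^ (x ⟨(q.1 : ℕ) - 1, by have := q.1.isLt; omega⟩).val) *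
              finalState n m T (fun i => U i.castSucc) x q) := funext key
    rw [this]
    refine degLE_sum _ _ fun q => ?_
    by_cases h0 : (q.1 : ℕ) = 0
    · simp only [dif_pos h0, one_mul]
      exact degLE_mono (Nat.le_succ T) (ih _ q)
    · simp only [dif_neg h0]
      exact degLE_oracle _ (ih _ q)

lemma oracleMat_isUnit (n m : ℕ) (x : Fin n → ZMod 2) : IsUnit (oracleMat n m x) := by
  have h : oracleMat n m x * oracleMat n m x = 1 := by
    rw [oracleMat, Matrix.diagonal_mul_diagonal]
    have h2 : (fun p : QIdx n m =>
        (if h : (p.1 : ℕ) = 0 then (1 : ℂ)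
         else (-1 : ℂ) ^ (x ⟨(p.1 : ℕ) - 1, by have := p.1.isLt; omega⟩).val) *
        (if h : (p.1 : ℕ) = 0 then (1 : ℂ)
         else (-1 : ℂ) ^ (x ⟨(p.1 : ℕ) - 1, by have := p.1.isLt; omega⟩).val))
        = fun _ => (1 : ℂ) := by
      funext p
      by_cases h0 : (p.1 : ℕ) = 0
      · simp only [dif_pos h0, mul_one]
      · simp only [dif_neg h0]
        exact neg_one_pow_sq _
    rw [h2, Matrix.diagonal_one]
  exact ⟨⟨_, _, h, h⟩, rfl⟩

lemma algMat_isUnit (n m : ℕ) (x : Fin n → ZMod 2) :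
    ∀ (T : ℕ) (U : Fin (T + 1) → Matrix (QIdx n m) (QIdx n m) ℂ),
      (∀ i, U i ∈ Matrix.unitaryGroup (QIdx n m) ℂ) → IsUnit (algMat n m x T U) := by
  have hu : ∀ (M : Matrix (QIdx n m) (QIdx n m) ℂ),
      M ∈ Matrix.unitaryGroup (QIdx n m) ℂ → IsUnit M := by
    intro M hM
    rw [Unitary.mem_iff] at hM
    exact ⟨⟨M, star M, hM.2, hM.1⟩, rfl⟩
  intro T
  induction T with
  | zero => intro U hU; exact hu _ (hU 0)
  | succ T ih =>
    intro U hU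
    exact ((hu _ (hU _)).mul (oracleMat_isUnit n m x)).mul (ih _ fun i => hU i.castSucc)

lemma isUnit_mulVec_ne_zero {ι : Type*} [Fintype ι] [DecidableEq ι]
    {M : Matrix ι ι ℂ} (hM : IsUnit M) {v : ι → ℂ} (hv : v ≠ 0) : M.mulVec v ≠ 0 := by
  intro h
  apply hv
  obtain ⟨u, hu⟩ := hM
  have h1 : (u⁻¹ : (Matrix ι ι ℂ)ˣ).val * M = 1 := by rw [← hu]; exact u.inv_mul
  calc v = (1 : Matrix ι ι ℂ).mulVec v := (Matrix.one_mulVec v).symm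
    _ = (u⁻¹ : (Matrix ι ι ℂ)ˣ).val.mulVec (M.mulVec v) := by
        rw [Matrix.mulVec_mulVec, h1]
    _ = 0 := by rw [h, Matrix.mulVec_zero]

lemma finalState_ne_zero (n m T : ℕ) (U : Fin (T + 1) → Matrix (QIdx n m) (QIdx n m) ℂ)
    (hU : ∀ i, U i ∈ Matrix.unitaryGroup (QIdx n m) ℂ) (x : Fin n → ZMod 2) :
    finalState n m T U x ≠ 0 := by
  apply isUnit_mulVec_ne_zero (algMat_isUnit n m x T U hU)
  intro h
  have := congrFun h ((0 : Fin (n + 1)), fun _ => (0 : ZMod 2))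
  simp [initVec] at this

end Stmt9Aux

namespace Stmt9Aux

def flip {n : ℕ} (i : Fin n) (x : Fin n → ZMod 2) : Fin n → ZMod 2 :=
  fun j => if j = i then x j + 1 else x j

lemma flip_flip {n : ℕ} (i : Fin n) (x : Fin n → ZMod 2) : flip i (flip i x) = x := by
  have h2 : ∀ v : ZMod 2, v + 1 + 1 = v := by decide
  funext j
  by_cases hj : j = i
  · simp only [flip, hj, if_pos rfl]
    exact h2 _
  · simp [flip, hj]

lemma flip_ne {n : ℕ} (i : Fin n) (x : Fin n → ZMod 2) : flip i x ≠ x := by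
  intro h
  have h1 : x i + 1 = x i := by
    have := congrFun h i
    rwa [flip, if_pos rfl] at this
  have h2 : ∀ v : ZMod 2, v + 1 ≠ v := by decide
  exact h2 _ h1

lemma chi_flip {n : ℕ} (i : Fin n) (A : Finset (Fin n)) (x : Fin n → ZMod 2) :
    chi A (flip i x) = (if i ∈ A then (-1 : ℂ) else 1) * chi A x := by
  by_cases hi : i ∈ A
  · rw [if_pos hi, chi, chi, ← Finset.mul_prod_erase _ _ hi, ← Finset.mul_prod_erase _ _ hi]
    have h1 : (∏ j ∈ A.erase i, (-1 : ℂ) ^ ((flip i x j).val))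
        = ∏ j ∈ A.erase i, (-1 : ℂ) ^ ((x j).val) := by
      refine Finset.prod_congr rfl fun j hj => ?_
      rw [flip, if_neg (Finset.mem_erase.1 hj).1]
    rw [h1, show flip i x i = x i + 1 from if_pos rfl, neg_one_pow_add_one]
    ring
  · rw [if_neg hi, one_mul, chi, chi]
    refine Finset.prod_congr rfl fun j hj => ?_
    have hji : j ≠ i := fun h => hi (h ▸ hj)
    rw [flip, if_neg hji]

lemma sum_chi_mul_chi_eq_zero {n : ℕ} {A B : Finset (Fin n)} {i : Fin n}
    (hiA : i ∉ A) (hiB : i ∈ B) (s : Finset (Fin n → ZMod 2))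
    (hs : ∀ x ∈ s, flip i x ∈ s) :
    ∑ x ∈ s, chi A x * chi B x = 0 := by
  refine Finset.sum_involution (fun x _ => flip i x) ?_ ?_ (fun x hx => hs x hx) ?_
  · intro x _
    rw [chi_flip, chi_flip, if_neg hiA, if_pos hiB]
    ring
  · intro x _ _
    exact flip_ne i x
  · intro x _
    exact flip_flip i x

end Stmt9Aux

/-- For even `n`, `1 ≤ t ≤ ⌊n/4⌋`, and a partition `S_1,…,S_t` of
`{⌊3n/4⌋+1,…,n}` into sets of size at least `t+1`, every exact quantum
algorithm computing
`f(x) = ((∏_{i=1}^{n/2} x_i) ⊕ (⊕_r ∏_{j∈S_r} x_j)) · ∏_{j=n/2+1}^{⌊3n/4⌋} x_j`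
makes at least `⌊3n/4⌋` queries. -/
theorem stmt9 (n t : ℕ) (hn : 0 < n) (heven : n % 2 = 0)
    (ht1 : 1 ≤ t) (ht2 : t ≤ n / 4)
    (S : Fin t → Finset (Fin n))
    (hdisj : ∀ i j : Fin t, i ≠ j → Disjoint (S i) (S j))
    (hcard : ∀ i, t + 1 ≤ (S i).card)
    (hcover : Finset.univ.biUnion S
      = Finset.univ.filter fun i : Fin n => 3 * n / 4 ≤ (i : ℕ))
    (f : (Fin n → ZMod 2) → ZMod 2)
    (hf : ∀ x, f x =
        ((∏ i ∈ Finset.univ.filter fun i : Fin n => (i : ℕ) < n / 2, x i)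
            + ∑ r : Fin t, ∏ j ∈ S r, x j)
          * ∏ j ∈ Finset.univ.filter
              fun j : Fin n => n / 2 ≤ (j : ℕ) ∧ (j : ℕ) < 3 * n / 4, x j) :
    ∀ m T : ℕ, ComputesExactly n m T f → 3 * n / 4 ≤ T := by
  classical
  intro m T hC
  obtain ⟨U, hU, P, hP, hPP, hPf⟩ := hC
  by_contra hT'
  push_neg at hT'
  set k := 3 * n / 4 with hk
  have hkn : k ≤ n := by omega
  set xs : Fin n → ZMod 2 := fun i => if (i : ℕ) < k then 1 else 0 with hxs
  set X : Finset (Fin n → ZMod 2) :=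
    Finset.univ.filter (fun x => ∀ j : Fin n, k ≤ (j : ℕ) → x j = 0) with hX
  set B : Finset (Fin n) := Finset.univ.filter (fun i : Fin n => (i : ℕ) < k) with hB
  have hxsX : xs ∈ X := by
    simp only [hX, Finset.mem_filter, Finset.mem_univ, true_and]
    intro j hj
    simp [hxs, Nat.not_lt.2 hj]
  have hShigh : ∀ r : Fin t, ∀ j ∈ S r, k ≤ (j : ℕ) := by
    intro r j hj
    have hmem : j ∈ Finset.univ.biUnion S :=
      Finset.mem_biUnion.2 ⟨r, Finset.mem_univ r, hj⟩
    rw [hcover] at hmem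
    exact (Finset.mem_filter.1 hmem).2
  have hSne : ∀ r : Fin t, (S r).Nonempty := fun r =>
    Finset.card_pos.1 (by have := hcard r; omega)
  have hsum0 : ∀ x : Fin n → ZMod 2, (∀ j : Fin n, k ≤ (j : ℕ) → x j = 0) →
      (∑ r : Fin t, ∏ j ∈ S r, x j) = 0 := by
    intro x hx
    refine Finset.sum_eq_zero fun r _ => ?_
    obtain ⟨j, hj⟩ := hSne r
    exact Finset.prod_eq_zero hj (hx j (hShigh r j hj))
  have hxs0 : ∀ j : Fin n, k ≤ (j : ℕ) → xs j = 0 := by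
    intro j hj; simp [hxs, Nat.not_lt.2 hj]
  have hfxs : f xs = 1 := by
    rw [hf, hsum0 xs hxs0]
    have h1 : (∏ i ∈ Finset.univ.filter fun i : Fin n => (i : ℕ) < n / 2, xs i) = 1 := by
      refine Finset.prod_eq_one fun i hi => ?_
      have h2 : (i : ℕ) < n / 2 := (Finset.mem_filter.1 hi).2
      simp [hxs, show (i : ℕ) < k by omega]
    have h2 : (∏ j ∈ Finset.univ.filter
        fun j : Fin n => n / 2 ≤ (j : ℕ) ∧ (j : ℕ) < 3 * n / 4, xs j) = 1 := by
      refine Finset.prod_eq_one fun j hj => ?_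
      have h3 := (Finset.mem_filter.1 hj).2
      simp [hxs, show (j : ℕ) < k by omega]
    rw [h1, h2]
    norm_num
  have hf0 : ∀ x ∈ X, x ≠ xs → f x = 0 := by
    intro x hx hne
    have hx0 : ∀ j : Fin n, k ≤ (j : ℕ) → x j = 0 := by
      have := (Finset.mem_filter.1 hx).2
      exact this
    obtain ⟨i, hi⟩ := Function.ne_iff.1 hne
    have hik : (i : ℕ) < k := by
      by_contra h
      refine hi ?_
      rw [hx0 i (Nat.le_of_not_lt h)]
      exact (if_neg h).symm
    have hxi : x i = 0 := by
      have h2 : ∀ v : ZMod 2, v ≠ 1 → v = 0 := by decide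
      apply h2
      intro h
      exact hi (by rw [h]; simp [hxs, hik])
    rw [hf, hsum0 x hx0]
    by_cases hcase : (i : ℕ) < n / 2
    · have h1 : (∏ i' ∈ Finset.univ.filter fun i' : Fin n => (i' : ℕ) < n / 2, x i') = 0 :=
        Finset.prod_eq_zero (Finset.mem_filter.2 ⟨Finset.mem_univ i, hcase⟩) hxi
      rw [h1]
      ring
    · have h1 : (∏ j ∈ Finset.univ.filter
          fun j : Fin n => n / 2 ≤ (j : ℕ) ∧ (j : ℕ) < 3 * n / 4, x j) = 0 :=
        Finset.prod_eq_zero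
          (Finset.mem_filter.2 ⟨Finset.mem_univ i, ⟨Nat.le_of_not_lt hcase, by omega⟩⟩) hxi
      rw [h1]
      ring
  have hpsine : finalState n m T U xs ≠ 0 := Stmt9Aux.finalState_ne_zero n m T U hU xs
  have hfix : P.mulVec (finalState n m T U xs) = finalState n m T U xs := (hPf xs).1 hfxs
  obtain ⟨p, hp⟩ := Function.ne_iff.1 hpsine
  set g : (Fin n → ZMod 2) → ℂ := fun x => P.mulVec (finalState n m T U x) p with hg
  have hgdeg : Stmt9Aux.DegLE n T g := by
    have hgeq : g = fun x => ∑ q : QIdx n m, P p q * finalState n m T U x q := by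
      funext x
      rfl
    rw [hgeq]
    exact Stmt9Aux.degLE_sum _ _ fun q => Stmt9Aux.finalState_degLE n m T U q
  have hgxs : g xs ≠ 0 := by
    rw [hg]
    simp only [hfix]
    exact hp
  have hgzero : ∀ x ∈ X, x ≠ xs → g x = 0 := by
    intro x hx hne
    rw [hg]
    simp only [(hPf x).2 (hf0 x hx hne)]
    rfl
  have hcardB : k ≤ B.card := by
    have hinj : Function.Injective
        (fun j : Fin k => (⟨(j : ℕ), lt_of_lt_of_le j.isLt hkn⟩ : Fin n)) := by
      intro a b hab
      have h1 := congrArg Fin.val hab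
      exact Fin.ext h1
    have hsub : (Finset.univ.image
        (fun j : Fin k => (⟨(j : ℕ), lt_of_lt_of_le j.isLt hkn⟩ : Fin n))) ⊆ B := by
      intro i hi
      obtain ⟨j, _, rfl⟩ := Finset.mem_image.1 hi
      exact Finset.mem_filter.2 ⟨Finset.mem_univ _, j.isLt⟩
    calc k = (Finset.univ : Finset (Fin k)).card := by simp
      _ = (Finset.univ.image
            (fun j : Fin k => (⟨(j : ℕ), lt_of_lt_of_le j.isLt hkn⟩ : Fin n))).card :=
          (Finset.card_image_of_injective _ hinj).symm
      _ ≤ B.card := Finset.card_le_card hsub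
  obtain ⟨c, hc0, hc⟩ := hgdeg
  have hL : ∑ x ∈ X, g x * Stmt9Aux.chi B x = g xs * Stmt9Aux.chi B xs := by
    refine Finset.sum_eq_single_of_mem xs hxsX fun x hx hne => ?_
    rw [hgzero x hx hne, zero_mul]
  have hR : ∑ x ∈ X, g x * Stmt9Aux.chi B x = 0 := by
    calc ∑ x ∈ X, g x * Stmt9Aux.chi B x
        = ∑ x ∈ X, ∑ A : Finset (Fin n), c A * Stmt9Aux.chi A x * Stmt9Aux.chi B x := by
          refine Finset.sum_congr rfl fun x _ => ?_
          rw [hc x, Finset.sum_mul]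
      _ = ∑ A : Finset (Fin n), ∑ x ∈ X, c A * Stmt9Aux.chi A x * Stmt9Aux.chi B x :=
          Finset.sum_comm
      _ = 0 := by
          refine Finset.sum_eq_zero fun A _ => ?_
          by_cases hcA : c A = 0
          · simp [hcA]
          · have hAcard : A.card ≤ T := by
              by_contra hlt
              exact hcA (hc0 A (Nat.lt_of_not_le hlt))
            have hnotsub : ¬ B ⊆ A := by
              intro hsub
              have := Finset.card_le_card hsub
              omega
            obtain ⟨i, hiB, hiA⟩ := Finset.not_subset.1 hnotsub
            have hik : (i : ℕ) < k := (Finset.mem_filter.1 hiB).2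
            have hXclosed : ∀ x ∈ X, Stmt9Aux.flip i x ∈ X := by
              intro x hx
              have hx0 : ∀ j : Fin n, k ≤ (j : ℕ) → x j = 0 := (Finset.mem_filter.1 hx).2
              refine Finset.mem_filter.2 ⟨Finset.mem_univ _, fun j hj => ?_⟩
              have hji : j ≠ i := by
                intro h
                rw [h] at hj
                omega
              rw [Stmt9Aux.flip, if_neg hji]
              exact hx0 j hj
            have hz : ∑ x ∈ X, Stmt9Aux.chi A x * Stmt9Aux.chi B x = 0 :=
              Stmt9Aux.sum_chi_mul_chi_eq_zero hiA hiB X hXclosed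
            calc ∑ x ∈ X, c A * Stmt9Aux.chi A x * Stmt9Aux.chi B x
                = c A * ∑ x ∈ X, Stmt9Aux.chi A x * Stmt9Aux.chi B x := by
                  rw [Finset.mul_sum]
                  exact Finset.sum_congr rfl fun x _ => by ring
              _ = 0 := by rw [hz, mul_zero]
  exact mul_ne_zero hgxs (Stmt9Aux.chi_ne_zero B xs) (hL ▸ hR)
end

section
/- (Untangling with one query.) Let n ≥ 4, let a, b, c, d be pairwise distinct elements of {1,…,n}, and let m ≥ 0. Then there exist unitaries A and B on ℂ^{n+1} ⊗ ℂ² ⊗ ℂ², independent of x, such that for every x ∈ {0,1}^n and all vectors W_1, W_2 ∈ (ℂ²)^{⊗m}: (B⊗I)(O_x⊗I)(A⊗I) [ (1/√2)( e_{x_a} ⊗ e_0 ⊗ e_{x_b} ⊗ W_1 + e_{x_c} ⊗ e_1 ⊗ e_{x_d} ⊗ W_2 ) ] = (−1)^{x_b} (1/√2)( e_{x_b} ⊗ e_0 ⊗ e_{x_d} ⊗ W_1 + e_{x_b} ⊗ e_1 ⊗ e_{x_d} ⊗ W_2 ), where for a bit v ∈ {0,1}, e_v denotes the standard basis vector e_0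 or e_1 of ℂ^{n+1} in the first factor and of ℂ² in the other factors. -/
open Matrix

/-- Index type for `ℂ^{n+1} ⊗ ℂ² ⊗ ℂ²`. -/
abbrev KIdx (n : ℕ) : Type := Fin (n + 1) × ZMod 2 × ZMod 2

/-- Index type for `ℂ^{n+1} ⊗ ℂ² ⊗ ℂ² ⊗ (ℂ²)^{⊗m}`. -/
abbrev JIdx (n m : ℕ) : Type := KIdx n × (Fin m → ZMod 2)

/-- The phase oracle `O_x` (tensored with the identity on the two explicit
work qubits): `e_0 ↦ e_0` and `e_i ↦ (−1)^{x_i} e_i` for `1 ≤ i ≤ n`. -/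
noncomputable def oracleK (n : ℕ) (x : Fin n → ZMod 2) :
    Matrix (KIdx n) (KIdx n) ℂ :=
  Matrix.diagonal fun k =>
    if h : (k.1 : ℕ) = 0 then 1
    else (-1 : ℂ) ^ (x ⟨(k.1 : ℕ) - 1, by have := k.1.isLt; omega⟩).val

/-- Extend a matrix on `ℂ^{n+1} ⊗ ℂ² ⊗ ℂ²` by the identity on `(ℂ²)^{⊗m}`. -/
noncomputable def extendW (n m : ℕ) (M : Matrix (KIdx n) (KIdx n) ℂ) :
    Matrix (JIdx n m) (JIdx n m) ℂ :=
  Matrix.kroneckerMap (· * ·) M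
    (1 : Matrix (Fin m → ZMod 2) (Fin m → ZMod 2) ℂ)

/-- The basis vector of `ℂ^{n+1}` indexed by a bit `v ∈ {0,1}`. -/
def bitFin (n : ℕ) (v : ZMod 2) : Fin (n + 1) :=
  ⟨v.val % (n + 1), Nat.mod_lt _ (Nat.succ_pos n)⟩

/-- The tensor `e_k ⊗ W` of a standard basis vector of
`ℂ^{n+1} ⊗ ℂ² ⊗ ℂ²` with an arbitrary vector `W` of `(ℂ²)^{⊗m}`. -/
noncomputable def etens (n m : ℕ) (k : KIdx n) (W : (Fin m → ZMod 2) → ℂ) :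
    JIdx n m → ℂ :=
  fun p => (if p.1 = k then 1 else 0) * W p.2



section Aux

variable {ι : Type*} [Fintype ι] [DecidableEq ι]

/-- standard basis vector -/
def ee (k : ι) : ι → ℂ := fun j => if j = k then 1 else 0

/-- permutation matrix -/
def permM (σ : Equiv.Perm ι) : Matrix ι ι ℂ :=
  Matrix.of fun i j => if j = σ i then 1 else 0

lemma permM_mulVec (σ : Equiv.Perm ι) (v : ι → ℂ) :
    permM σ *ᵥ v = fun i => v (σ i) := by
  funext i
  simp [permM, mulVec, dotProduct, ite_mul]

lemma permM_mulVec_ee (σ : Equiv.Perm ι) (k : ι) :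
    permM σ *ᵥ ee k = ee (σ.symm k) := by
  rw [permM_mulVec]
  funext i
  simp only [ee]
  congr 1
  apply propext
  constructor
  · rintro rfl; simp
  · rintro rfl; simp

lemma permM_mem (σ : Equiv.Perm ι) : permM σ ∈ Matrix.unitaryGroup ι ℂ := by
  rw [Matrix.mem_unitaryGroup_iff']
  ext i j
  rw [Matrix.mul_apply]
  have : ∀ k, (star (permM σ)) i k * (permM σ) k j
      = if k = σ.symm i then (if j = σ k then 1 else 0) else 0 := by
    intro k
    simp only [Matrix.star_apply, permM, Matrix.of_apply]
    by_cases h : k = σ.symm i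
    · subst h; simp
    · have : ¬ i = σ k := by
        intro hh; exact h (by simp [hh])
      simp [this, h]
  simp only [this, Finset.sum_ite_eq' Finset.univ, Finset.mem_univ, if_true]
  simp [Matrix.one_apply, eq_comm]

lemma mulVec_ee (M : Matrix ι ι ℂ) (k : ι) : M *ᵥ ee k = fun j => M j k := by
  funext j
  simp [ee, mulVec, dotProduct]

lemma diag_mulVec_ee (d : ι → ℂ) (k : ι) :
    Matrix.diagonal d *ᵥ ee k = d k • ee k := by
  funext j
  rw [Matrix.mulVec_diagonal]
  simp only [ee, Pi.smul_apply, smul_eq_mul]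
  by_cases h : j = k
  · subst h; simp
  · simp [h]


variable {κ : Type*} [Fintype κ] [DecidableEq κ]

/-- tensor with the identity on a second factor -/
def kron1 (M : Matrix ι ι ℂ) : Matrix (ι × κ) (ι × κ) ℂ :=
  Matrix.kroneckerMap (· * ·) M (1 : Matrix κ κ ℂ)

omit [Fintype ι] [DecidableEq ι] [Fintype κ] in
lemma kron1_conjTranspose (M : Matrix ι ι ℂ) :
    (kron1 (κ := κ) M)ᴴ = kron1 Mᴴ := by
  ext ⟨i, z⟩ ⟨j, w⟩
  simp only [kron1, Matrix.conjTranspose_apply, Matrix.kroneckerMap_apply, star_mul',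
    Matrix.one_apply]
  by_cases h : z = w
  · subst h; simp [mul_comm]
  · simp [h, eq_comm]

lemma kron1_mul (M N : Matrix ι ι ℂ) :
    kron1 (κ := κ) M * kron1 N = kron1 (M * N) := by
  have := (Matrix.mul_kronecker_mul (α := ℂ) M N (1 : Matrix κ κ ℂ) (1 : Matrix κ κ ℂ)).symm
  simpa [kron1, Matrix.kronecker, mul_one] using this

omit [Fintype ι] [Fintype κ] in
lemma kron1_one : kron1 (κ := κ) (1 : Matrix ι ι ℂ) = 1 := by
  simpa [kron1] using Matrix.one_kronecker_one (α := ℂ) (l := ι) (m := κ)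

lemma kron1_mem {M : Matrix ι ι ℂ} (h : M ∈ Matrix.unitaryGroup ι ℂ) :
    kron1 (κ := κ) M ∈ Matrix.unitaryGroup (ι × κ) ℂ := by
  rw [Matrix.mem_unitaryGroup_iff] at h ⊢
  rw [Matrix.star_eq_conjTranspose, kron1_conjTranspose, kron1_mul,
    ← Matrix.star_eq_conjTranspose, h, kron1_one]

lemma kron1_mulVec_ee (M : Matrix ι ι ℂ) (i : ι) (z : κ) :
    kron1 M *ᵥ ee (i, z) = fun p => M p.1 i * (if p.2 = z then 1 else 0) := by
  funext ⟨j, w⟩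
  simp only [kron1, mulVec, dotProduct, Fintype.sum_prod_type, ee,
    Matrix.kroneckerMap_apply, Matrix.one_apply, Prod.mk.injEq]
  rw [Finset.sum_comm]
  simp [Finset.sum_ite_eq', Finset.sum_ite_eq, ite_and, mul_ite]


end Aux

noncomputable section Rot

/-- `1/√2` -/
noncomputable def s2 : ℂ := ((Real.sqrt 2 : ℂ))⁻¹

lemma star_s2 : star s2 = s2 := by
  simp [s2, Complex.star_def, map_inv₀, Complex.conj_ofReal]

lemma sqrt2_sq : ((Real.sqrt 2 : ℂ)) * ((Real.sqrt 2 : ℂ)) = 2 := by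
  rw [← Complex.ofReal_mul, Real.mul_self_sqrt (by norm_num)]
  norm_num

lemma s2_mul_s2 : s2 * s2 = 2⁻¹ := by
  rw [s2, ← mul_inv, sqrt2_sq]

lemma s2_sq : s2 ^ 2 = 2⁻¹ := by rw [sq, s2_mul_s2]

/-- the rotation acting on the span of `e_0, e_1`. -/
def rotS (n : ℕ) : Matrix (Fin (n + 1)) (Fin (n + 1)) ℂ :=
  Matrix.of fun i j =>
    if (i : ℕ) ≤ 1 ∧ (j : ℕ) ≤ 1 then
      (if (j : ℕ) = 0 then s2 else if (i : ℕ) = 0 then -s2 else s2)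
    else if i = j then 1 else 0

variable {n : ℕ}

lemma rotS_zero {i j : Fin (n + 1)} (h : ¬((i : ℕ) ≤ 1 ∧ (j : ℕ) ≤ 1)) (hij : i ≠ j) :
    rotS n i j = 0 := by
  simp only [rotS, Matrix.of_apply]
  rw [if_neg h, if_neg hij]

lemma rotS_delta {i j : Fin (n + 1)} (h : ¬((i : ℕ) ≤ 1 ∧ (j : ℕ) ≤ 1)) :
    rotS n i j = if i = j then 1 else 0 := by
  simp only [rotS, Matrix.of_apply]
  rw [if_neg h]

lemma val_one_fin (hn : 1 ≤ n) : ((1 : Fin (n + 1)) : ℕ) = 1 := by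
  rw [Fin.val_one']
  exact Nat.mod_eq_of_lt (by omega)

lemma ne_fin_of_val {i j : Fin (n + 1)} (h : (i : ℕ) ≠ (j : ℕ)) : i ≠ j :=
  fun hh => h (congrArg Fin.val hh)

lemma rotS_mem (hn : 1 ≤ n) : rotS n ∈ Matrix.unitaryGroup (Fin (n + 1)) ℂ := by
  have h1 : ((1 : Fin (n + 1)) : ℕ) = 1 := val_one_fin hn
  have h01 : (0 : Fin (n + 1)) ≠ 1 := ne_fin_of_val (by rw [Fin.val_zero, h1]; omega)
  have hsq : s2 ^ 2 = 2⁻¹ := by rw [sq, s2_mul_s2]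
  have e00 : rotS n 0 0 = s2 := by simp [rotS]
  have e01 : rotS n 0 1 = -s2 := by
    simp only [rotS, Matrix.of_apply, Fin.val_zero, h1]
    norm_num
  have e10 : rotS n 1 0 = s2 := by
    simp only [rotS, Matrix.of_apply, Fin.val_zero, h1]
    norm_num
  have e11 : rotS n 1 1 = s2 := by
    simp only [rotS, Matrix.of_apply, h1]
    norm_num
  rw [Matrix.mem_unitaryGroup_iff]
  ext i j
  rw [Matrix.mul_apply]
  simp only [Matrix.star_eq_conjTranspose, Matrix.conjTranspose_apply]
  by_cases hi : (i : ℕ) ≤ 1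
  · by_cases hj : (j : ℕ) ≤ 1
    · have hz : ∀ k ∈ Finset.univ, k ∉ ({0, 1} : Finset (Fin (n + 1))) →
          rotS n i k * star (rotS n j k) = 0 := by
        intro k _ hk
        simp only [Finset.mem_insert, Finset.mem_singleton, not_or] at hk
        have hk2 : 2 ≤ (k : ℕ) := by
          rcases hk with ⟨hk0, hk1⟩
          have t0 : (k : ℕ) ≠ 0 := fun h => hk0 (Fin.ext (by simp [h]))
          have t1 : (k : ℕ) ≠ 1 := fun h => hk1 (Fin.ext (by rw [h, h1]))
          omega
        rw [rotS_zero (by omega) (ne_fin_of_val (by omega)), zero_mul]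
      rw [← Finset.sum_subset (Finset.subset_univ ({0, 1} : Finset (Fin (n + 1)))) hz,
        Finset.sum_pair h01]
      have hii : i = 0 ∨ i = 1 := by
        rcases (by omega : (i : ℕ) = 0 ∨ (i : ℕ) = 1) with h' | h'
        · exact Or.inl (Fin.ext (by simp [h']))
        · exact Or.inr (Fin.ext (by rw [h', h1]))
      have hjj : j = 0 ∨ j = 1 := by
        rcases (by omega : (j : ℕ) = 0 ∨ (j : ℕ) = 1) with h' | h'
        · exact Or.inl (Fin.ext (by simp [h']))
        · exact Or.inr (Fin.ext (by rw [h', h1]))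
      rcases hii with rfl | rfl <;> rcases hjj with rfl | rfl
      · simp only [e00, e01, star_neg, star_s2]
        rw [Matrix.one_apply, if_pos rfl]
        ring_nf
        norm_num [hsq]
      · simp only [e00, e01, e10, e11, star_neg, star_s2]
        rw [Matrix.one_apply, if_neg h01]
        ring
      · simp only [e00, e01, e10, e11, star_neg, star_s2]
        rw [Matrix.one_apply, if_neg h01.symm]
        ring
      · simp only [e10, e11, star_neg, star_s2]
        rw [Matrix.one_apply, if_pos rfl]
        ring_nf
        norm_num [hsq]
    · have hall : ∀ k ∈ Finset.univ, rotS n i k * star (rotS n j k) = 0 := by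
        intro k _
        by_cases h : k = j
        · subst h
          rw [rotS_zero (by omega) (ne_fin_of_val (by omega)), zero_mul]
        · rw [rotS_delta (i := j) (j := k) (by omega),
            if_neg (fun hh : j = k => h hh.symm), star_zero, mul_zero]
      rw [Finset.sum_eq_zero hall, Matrix.one_apply, if_neg (ne_fin_of_val (by omega))]
  · have hdel : ∀ k, rotS n i k = if i = k then 1 else 0 := fun k =>
      rotS_delta (by omega)
    rw [Finset.sum_eq_single i
      (fun k _ hk => by rw [hdel k, if_neg (fun hh : i = k => hk hh.symm), zero_mul])
      (fun h => absurd (Finset.mem_univ i) h)]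
    rw [hdel i, if_pos rfl, one_mul, Matrix.one_apply]
    by_cases hj : (j : ℕ) ≤ 1
    · rw [rotS_zero (by omega) (ne_fin_of_val (by omega)), star_zero,
        if_neg (ne_fin_of_val (by omega))]
    · rw [rotS_delta (i := j) (j := i) (by omega)]
      by_cases h : i = j
      · subst h; simp
      · rw [if_neg (fun hh : j = i => h hh.symm), if_neg h, star_zero]

end Rot

noncomputable section Gates

variable {n : ℕ}

lemma zmod2_cases : ∀ z : ZMod 2, z = 0 ∨ z = 1 := by decide

lemma zmod2_ne : (0 : ZMod 2) ≠ 1 := by decide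

lemma bitFin_val (z : ZMod 2) : ((bitFin n z : Fin (n + 1)) : ℕ) = z.val % (n + 1) := rfl

lemma bitFin_le (hn : 1 ≤ n) (z : ZMod 2) : ((bitFin n z : Fin (n + 1)) : ℕ) ≤ 1 := by
  have hz : z.val < 2 := z.val_lt
  rw [bitFin_val, Nat.mod_eq_of_lt (by omega)]
  omega

lemma bit0 : bitFin n 0 = 0 := by
  apply Fin.ext
  rw [bitFin_val, Fin.val_zero]
  simp

lemma bit1 (hn : 1 ≤ n) : bitFin n 1 = 1 := by
  apply Fin.ext
  rw [bitFin_val, Fin.val_one', show ((1 : ZMod 2).val) = 1 from rfl]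

lemma bitFin_val_of (hn : 1 ≤ n) (z : ZMod 2) :
    ((bitFin n z : Fin (n + 1)) : ℕ) = z.val := by
  have hz : z.val < 2 := z.val_lt
  rw [bitFin_val, Nat.mod_eq_of_lt (by omega)]

/-- the permutation of `Fin (n+1)` sending `0 ↦ u+1`, `1 ↦ v+1`. -/
def ecP (n : ℕ) (u v : Fin n) : Equiv.Perm (Fin (n + 1)) :=
  (Equiv.swap 1 v.succ).trans (Equiv.swap 0 u.succ)

lemma ecP_zero (hn : 1 ≤ n) (u v : Fin n) : ecP n u v 0 = u.succ := by
  have h01 : (0 : Fin (n + 1)) ≠ 1 := ne_fin_of_val (by rw [Fin.val_zero, val_one_fin hn]; omega)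
  rw [ecP, Equiv.trans_apply,
    Equiv.swap_apply_of_ne_of_ne h01 (Ne.symm (Fin.succ_ne_zero v)),
    Equiv.swap_apply_left]

lemma ecP_one (hn : 1 ≤ n) (u v : Fin n) (huv : u ≠ v) : ecP n u v 1 = v.succ := by
  rw [ecP, Equiv.trans_apply, Equiv.swap_apply_left,
    Equiv.swap_apply_of_ne_of_ne (Fin.succ_ne_zero v)
      (fun h => huv ((Fin.succ_injective n h).symm))]

lemma ecP_symm_zero (hn : 1 ≤ n) (u v : Fin n) : (ecP n u v).symm u.succ = 0 := by
  rw [Equiv.symm_apply_eq, ecP_zero hn]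

lemma ecP_symm_one (hn : 1 ≤ n) (u v : Fin n) (huv : u ≠ v) :
    (ecP n u v).symm v.succ = 1 := by
  rw [Equiv.symm_apply_eq, ecP_one hn u v huv]

/-- a permutation of the first register controlled by the first work qubit. -/
def ctrlE (e0 e1 : Equiv.Perm (Fin (n + 1))) : Equiv.Perm (KIdx n) where
  toFun k := ((if k.2.1 = 0 then e0 else e1) k.1, k.2)
  invFun k := ((if k.2.1 = 0 then e0.symm else e1.symm) k.1, k.2)
  left_inv := by rintro ⟨i, c, u⟩; by_cases h : c = 0 <;> simp [h]
  right_inv := by rintro ⟨i, c, u⟩; by_cases h : c = 0 <;> simp [h]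

lemma ctrlE_apply0 (e0 e1 : Equiv.Perm (Fin (n + 1))) (i : Fin (n + 1)) (u : ZMod 2) :
    ctrlE e0 e1 (i, ((0 : ZMod 2), u)) = (e0 i, (0, u)) := by
  show ((if (0 : ZMod 2) = 0 then e0 else e1) i, ((0 : ZMod 2), u)) = _
  rw [if_pos rfl]

lemma ctrlE_apply1 (e0 e1 : Equiv.Perm (Fin (n + 1))) (i : Fin (n + 1)) (u : ZMod 2) :
    ctrlE e0 e1 (i, ((1 : ZMod 2), u)) = (e1 i, (1, u)) := by
  show ((if (1 : ZMod 2) = 0 then e0 else e1) i, ((1 : ZMod 2), u)) = _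
  rw [if_neg (fun h => zmod2_ne h.symm)]

lemma ctrlE_symm (e0 e1 : Equiv.Perm (Fin (n + 1))) :
    (ctrlE e0 e1).symm = ctrlE e0.symm e1.symm := rfl

/-- controlled swap of first and third registers. -/
def tauF (n : ℕ) : KIdx n → KIdx n := fun k =>
  if k.2.1 = 0 ∧ (k.1 : ℕ) ≤ 1 then
    (bitFin n k.2.2, (0, if (k.1 : ℕ) = 1 then 1 else 0)) else k

lemma tauF_apply0 (u : ZMod 2) :
    tauF n ((0 : Fin (n + 1)), ((0 : ZMod 2), u)) = (bitFin n u, (0, 0)) := by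
  show (if (0 : ZMod 2) = 0 ∧ ((0 : Fin (n + 1)) : ℕ) ≤ 1 then _ else _) = _
  rw [if_pos ⟨rfl, by rw [Fin.val_zero]; omega⟩]
  norm_num

lemma tauF_apply1 (hn : 1 ≤ n) (u : ZMod 2) :
    tauF n ((1 : Fin (n + 1)), ((0 : ZMod 2), u)) = (bitFin n u, (0, 1)) := by
  show (if (0 : ZMod 2) = 0 ∧ ((1 : Fin (n + 1)) : ℕ) ≤ 1 then _ else _) = _
  rw [if_pos ⟨rfl, by rw [val_one_fin hn]⟩, val_one_fin hn]
  norm_num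

lemma tauF_applyc1 (i : Fin (n + 1)) (u : ZMod 2) :
    tauF n (i, ((1 : ZMod 2), u)) = (i, (1, u)) := by
  show (if (1 : ZMod 2) = 0 ∧ (i : ℕ) ≤ 1 then _ else _) = _
  rw [if_neg (fun h => zmod2_ne h.1.symm)]

lemma tauF_inv (hn : 1 ≤ n) : Function.Involutive (tauF n) := by
  rintro ⟨i, c, u⟩
  by_cases h : c = 0 ∧ (i : ℕ) ≤ 1
  · obtain ⟨hc, hi⟩ := h
    subst hc
    have hii : i = 0 ∨ i = 1 := by
      rcases (by omega : (i : ℕ) = 0 ∨ (i : ℕ) = 1) with h' | h'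
      · exact Or.inl (Fin.ext (by rw [h', Fin.val_zero]))
      · exact Or.inr (Fin.ext (by rw [h', val_one_fin hn]))
    rcases hii with rfl | rfl
    · rw [tauF_apply0]
      rcases zmod2_cases u with rfl | rfl
      · rw [bit0, tauF_apply0, bit0]
      · rw [bit1 hn, tauF_apply1 hn, bit0]
    · rw [tauF_apply1 hn]
      rcases zmod2_cases u with rfl | rfl
      · rw [bit0, tauF_apply0, bit1 hn]
      · rw [bit1 hn, tauF_apply1 hn, bit1 hn]
  · have e : tauF n (i, c, u) = (i, c, u) := if_neg h
    rw [e, e]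

def tauE (n : ℕ) (hn : 1 ≤ n) : Equiv.Perm (KIdx n) :=
  Function.Involutive.toPerm (tauF n) (tauF_inv hn)

lemma tauE_coe (hn : 1 ≤ n) : ⇑(tauE n hn) = tauF n := rfl

lemma tauE_symm (hn : 1 ≤ n) : (tauE n hn).symm = tauE n hn :=
  Function.Involutive.toPerm_symm _

/-- the final phase-fixing diagonal. -/
def dph (n : ℕ) : KIdx n → ℂ := fun k =>
  if k.2.1 = 0 then (-1 : ℂ) ^ ((if (k.1 : ℕ) = 1 then 1 else 0) + (k.2.2).val) else 1

lemma dph_mem : Matrix.diagonal (dph n) ∈ Matrix.unitaryGroup (KIdx n) ℂ := by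
  rw [Matrix.mem_unitaryGroup_iff, Matrix.star_eq_conjTranspose,
    Matrix.diagonal_conjTranspose, Matrix.diagonal_mul_diagonal, ← Matrix.diagonal_one]
  refine congrArg Matrix.diagonal (funext fun k => ?_)
  simp only [dph, Pi.star_apply]
  by_cases h : k.2.1 = 0
  · rw [if_pos h, star_pow, star_neg, star_one, ← mul_pow]
    norm_num
  · rw [if_neg h, star_one, mul_one]

lemma dph_eval0 (hn : 1 ≤ n) (q u : ZMod 2) :
    dph n (bitFin n q, ((0 : ZMod 2), u)) = (-1 : ℂ) ^ (q.val + u.val) := by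
  show (if (0 : ZMod 2) = 0 then
      (-1 : ℂ) ^ ((if ((bitFin n q : Fin (n + 1)) : ℕ) = 1 then 1 else 0) + u.val) else 1) = _
  rw [if_pos rfl]
  congr 2
  rcases zmod2_cases q with rfl | rfl
  · rw [bitFin_val_of hn]
    norm_num
  · rw [bitFin_val_of hn, show ((1 : ZMod 2).val) = 1 from rfl]
    norm_num

lemma dph_eval1 (i : Fin (n + 1)) (u : ZMod 2) :
    dph n (i, ((1 : ZMod 2), u)) = 1 := by
  show (if (1 : ZMod 2) = 0 then
      (-1 : ℂ) ^ ((if (i : ℕ) = 1 then 1 else 0) + u.val) else 1) = 1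
  rw [if_neg (fun h => zmod2_ne h.symm)]

/-- oracle action on basis vectors. -/
lemma oracleK_mulVec_ee (x : Fin n → ZMod 2) (i : Fin n) (z : ZMod 2 × ZMod 2) :
    oracleK n x *ᵥ ee (i.succ, z) = ((-1 : ℂ) ^ (x i).val) • ee (i.succ, z) := by
  rw [oracleK, diag_mulVec_ee]
  congr 1

/-- rotation action on basis vectors of the `{e_0, e_1}` span. -/
lemma rot_mulVec_ee (hn : 1 ≤ n) (i : Fin (n + 1)) (hi : (i : ℕ) ≤ 1)
    (z : ZMod 2 × ZMod 2) :
    kron1 (rotS n) *ᵥ ee (i, z)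
      = rotS n 0 i • ee ((0 : Fin (n + 1)), z) + rotS n 1 i • ee ((1 : Fin (n + 1)), z) := by
  have h1 : ((1 : Fin (n + 1)) : ℕ) = 1 := val_one_fin hn
  have h01 : (0 : Fin (n + 1)) ≠ 1 := ne_fin_of_val (by rw [Fin.val_zero, h1]; omega)
  rw [kron1_mulVec_ee]
  funext p
  obtain ⟨j, w⟩ := p
  simp only [ee, Pi.add_apply, Pi.smul_apply, smul_eq_mul, Prod.mk.injEq]
  by_cases hw : w = z
  · subst hw
    by_cases hjle : (j : ℕ) ≤ 1
    · have hjj : j = 0 ∨ j = 1 := by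
        rcases (by omega : (j : ℕ) = 0 ∨ (j : ℕ) = 1) with h' | h'
        · exact Or.inl (Fin.ext (by rw [h', Fin.val_zero]))
        · exact Or.inr (Fin.ext (by rw [h', h1]))
      rcases hjj with rfl | rfl
      · simp [h01]
      · simp [h01.symm]
    · have hz : rotS n j i = 0 := rotS_zero (by omega) (ne_fin_of_val (by omega))
      have hj0 : j ≠ 0 := ne_fin_of_val (by rw [Fin.val_zero]; omega)
      have hj1 : j ≠ 1 := ne_fin_of_val (by rw [h1]; omega)
      simp [hz, hj0, hj1]
  · simp [hw]

lemma rotT_mulVec_ee (hn : 1 ≤ n) (i : Fin (n + 1)) (hi : (i : ℕ) ≤ 1)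
    (z : ZMod 2 × ZMod 2) :
    kron1 (rotS n)ᴴ *ᵥ ee (i, z)
      = star (rotS n i 0) • ee ((0 : Fin (n + 1)), z)
        + star (rotS n i 1) • ee ((1 : Fin (n + 1)), z) := by
  have h1 : ((1 : Fin (n + 1)) : ℕ) = 1 := val_one_fin hn
  have h01 : (0 : Fin (n + 1)) ≠ 1 := ne_fin_of_val (by rw [Fin.val_zero, h1]; omega)
  rw [kron1_mulVec_ee]
  funext p
  obtain ⟨j, w⟩ := p
  simp only [ee, Pi.add_apply, Pi.smul_apply, smul_eq_mul, Prod.mk.injEq,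
    Matrix.conjTranspose_apply]
  by_cases hw : w = z
  · subst hw
    by_cases hjle : (j : ℕ) ≤ 1
    · have hjj : j = 0 ∨ j = 1 := by
        rcases (by omega : (j : ℕ) = 0 ∨ (j : ℕ) = 1) with h' | h'
        · exact Or.inl (Fin.ext (by rw [h', Fin.val_zero]))
        · exact Or.inr (Fin.ext (by rw [h', h1]))
      rcases hjj with rfl | rfl
      · simp [h01]
      · simp [h01.symm]
    · have hz : rotS n i j = 0 := rotS_zero (by omega) (ne_fin_of_val (by omega))
      have hj0 : j ≠ 0 := ne_fin_of_val (by rw [Fin.val_zero]; omega)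
      have hj1 : j ≠ 1 := ne_fin_of_val (by rw [h1]; omega)
      simp [hz, hj0, hj1]
  · simp [hw]


lemma rotS00 : rotS n 0 0 = s2 := by simp [rotS]

lemma rotS01 (hn : 1 ≤ n) : rotS n 0 1 = -s2 := by
  simp only [rotS, Matrix.of_apply, Fin.val_zero, val_one_fin hn]
  norm_num

lemma rotS10 (hn : 1 ≤ n) : rotS n 1 0 = s2 := by
  simp only [rotS, Matrix.of_apply, Fin.val_zero, val_one_fin hn]
  norm_num

lemma rotS11 (hn : 1 ≤ n) : rotS n 1 1 = s2 := by
  simp only [rotS, Matrix.of_apply, val_one_fin hn]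
  norm_num

end Gates


section Combo

variable {ι : Type*}

lemma combo0 (E0 E1 : ι → ℂ) (c0 c1 c2 c3 γ : ℂ) (h02 : c0 + c2 = γ) (h13 : c1 + c3 = 0) :
    c0 • E0 + c1 • E1 + (c2 • E0 + c3 • E1) = γ • E0 := by
  rw [add_add_add_comm, ← add_smul, ← add_smul, h02, h13, zero_smul, add_zero]

lemma combo1 (E0 E1 : ι → ℂ) (c0 c1 c2 c3 γ : ℂ) (h02 : c0 + c2 = 0) (h13 : c1 + c3 = γ) :
    c0 • E0 + c1 • E1 + (c2 • E0 + c3 • E1) = γ • E1 := by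
  rw [add_add_add_comm, ← add_smul, ← add_smul, h02, h13, zero_smul, zero_add]

end Combo

section Reduce

variable {n m : ℕ}

lemma extend_col (M N : Matrix (KIdx n) (KIdx n) ℂ) (k : KIdx n)
    (W : (Fin m → ZMod 2) → ℂ) :
    (extendW n m M) *ᵥ (fun p : JIdx n m => N p.1 k * W p.2)
      = fun p : JIdx n m => (M * N) p.1 k * W p.2 := by
  funext p
  obtain ⟨j, w⟩ := p
  simp only [extendW, mulVec, dotProduct,
    Matrix.kroneckerMap_apply, Matrix.one_apply, Matrix.mul_apply]
  rw [Fintype.sum_prod_type]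
  have step : ∀ l, (∑ w' : Fin m → ZMod 2,
      (M j l * if w = w' then 1 else 0) * (N l k * W w')) = M j l * (N l k * W w) := by
    intro l
    rw [Finset.sum_eq_single w
      (fun b _ hb => by rw [if_neg (fun hh => hb hh.symm)]; ring)
      (fun h => absurd (Finset.mem_univ w) h)]
    rw [if_pos rfl]
    ring
  rw [Finset.sum_congr rfl (fun l _ => step l)]
  rw [show (∑ l, M j l * (N l k * W w)) = (∑ l, M j l * N l k) * W w from by
    rw [Finset.sum_mul]; exact Finset.sum_congr rfl (fun l _ => by ring)]

end Reduce

/-- Untangling with one query: there are `x`-independent unitaries `A`, `B` on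
`ℂ^{n+1} ⊗ ℂ² ⊗ ℂ²` transforming
`(1/√2)(e_{x_a} ⊗ e_0 ⊗ e_{x_b} ⊗ W₁ + e_{x_c} ⊗ e_1 ⊗ e_{x_d} ⊗ W₂)` into
`(−1)^{x_b} (1/√2)(e_{x_b} ⊗ e_0 ⊗ e_{x_d} ⊗ W₁ + e_{x_b} ⊗ e_1 ⊗ e_{x_d} ⊗ W₂)`
with a single oracle query. -/
theorem stmt10 (n m : ℕ) (hn : 4 ≤ n) (a b c d : Fin n)
    (hab : a ≠ b) (hac : a ≠ c) (had : a ≠ d)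
    (hbc : b ≠ c) (hbd : b ≠ d) (hcd : c ≠ d) :
    ∃ A B : Matrix (KIdx n) (KIdx n) ℂ,
      A ∈ Matrix.unitaryGroup (KIdx n) ℂ ∧
      B ∈ Matrix.unitaryGroup (KIdx n) ℂ ∧
      ∀ (x : Fin n → ZMod 2) (W1 W2 : (Fin m → ZMod 2) → ℂ),
        (extendW n m B).mulVec ((extendW n m (oracleK n x)).mulVec
            ((extendW n m A).mulVec
              (((Real.sqrt 2 : ℂ))⁻¹ •
                (etens n m (bitFin n (x a), 0, x b) W1
                  + etens n m (bitFin n (x c), 1, x d) W2))))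
          = ((-1 : ℂ) ^ (x b).val) •
              (((Real.sqrt 2 : ℂ))⁻¹ •
                (etens n m (bitFin n (x b), 0, x d) W1
                  + etens n m (bitFin n (x b), 1, x d) W2)) := by
  have hn1 : 1 ≤ n := by omega
  have h1 : ((1 : Fin (n + 1)) : ℕ) = 1 := val_one_fin hn1
  have hbitle := bitFin_le (n := n) hn1
  refine ⟨permM (ctrlE (ecP n a d).symm (ecP n c b).symm) * kron1 (rotS n),
    Matrix.diagonal (dph n) *
      (permM (tauE n hn1) * (kron1 (rotS n)ᴴ * permM (ctrlE (ecP n a d) (ecP n c b)))),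
    ?_, ?_, ?_⟩
  · exact mul_mem (permM_mem _) (kron1_mem (rotS_mem hn1))
  · refine mul_mem dph_mem (mul_mem (permM_mem _) (mul_mem ?_ (permM_mem _)))
    refine kron1_mem ?_
    rw [← Matrix.star_eq_conjTranspose]
    exact Unitary.star_mem (rotS_mem hn1)
  intro x W1 W2
  set Am : Matrix (KIdx n) (KIdx n) ℂ :=
    permM (ctrlE (ecP n a d).symm (ecP n c b).symm) * kron1 (rotS n) with hAm
  set Bm : Matrix (KIdx n) (KIdx n) ℂ :=
    Matrix.diagonal (dph n) *
      (permM (tauE n hn1) * (kron1 (rotS n)ᴴ * permM (ctrlE (ecP n a d) (ecP n c b)))) with hBm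
  -- the two key column computations
  have hchain1 : Bm *ᵥ (oracleK n x *ᵥ (Am *ᵥ ee ((bitFin n (x a), (0, x b)) : KIdx n)))
      = ((-1 : ℂ) ^ (x b).val) • ee ((bitFin n (x b), (0, x d)) : KIdx n) := by
    have EA0 : (ctrlE (ecP n a d).symm (ecP n c b).symm).symm
        ((0 : Fin (n + 1)), ((0 : ZMod 2), x b)) = (a.succ, (0, x b)) := by
      rw [ctrlE_symm, Equiv.symm_symm, Equiv.symm_symm, ctrlE_apply0, ecP_zero hn1]
    have EA1 : (ctrlE (ecP n a d).symm (ecP n c b).symm).symm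
        ((1 : Fin (n + 1)), ((0 : ZMod 2), x b)) = (d.succ, (0, x b)) := by
      rw [ctrlE_symm, Equiv.symm_symm, Equiv.symm_symm, ctrlE_apply0, ecP_one hn1 a d had]
    have EB0 : (ctrlE (ecP n a d) (ecP n c b)).symm (a.succ, ((0 : ZMod 2), x b))
        = ((0 : Fin (n + 1)), (0, x b)) := by
      rw [ctrlE_symm, ctrlE_apply0, ecP_symm_zero hn1]
    have EB1 : (ctrlE (ecP n a d) (ecP n c b)).symm (d.succ, ((0 : ZMod 2), x b))
        = ((1 : Fin (n + 1)), (0, x b)) := by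
      rw [ctrlE_symm, ctrlE_apply0, ecP_symm_one hn1 a d had]
    have ET0 : (tauE n hn1).symm ((0 : Fin (n + 1)), ((0 : ZMod 2), x b))
        = (bitFin n (x b), (0, 0)) := by
      rw [tauE_symm]
      exact tauF_apply0 (x b)
    have ET1 : (tauE n hn1).symm ((1 : Fin (n + 1)), ((0 : ZMod 2), x b))
        = (bitFin n (x b), (0, 1)) := by
      rw [tauE_symm]
      exact tauF_apply1 hn1 (x b)
    have HrotA := rot_mulVec_ee hn1 (bitFin n (x a)) (hbitle (x a)) ((0 : ZMod 2), x b)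
    have HT0 := rotT_mulVec_ee hn1 0 (by rw [Fin.val_zero]; omega) ((0 : ZMod 2), x b)
    have HT1 := rotT_mulVec_ee hn1 1 (le_of_eq h1) ((0 : ZMod 2), x b)
    have HOa := oracleK_mulVec_ee x a ((0 : ZMod 2), x b)
    have HOd := oracleK_mulVec_ee x d ((0 : ZMod 2), x b)
    have HD0 := diag_mulVec_ee (dph n) ((bitFin n (x b), ((0 : ZMod 2), (0 : ZMod 2))) : KIdx n)
    have HD1 := diag_mulVec_ee (dph n) ((bitFin n (x b), ((0 : ZMod 2), (1 : ZMod 2))) : KIdx n)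
    rw [hAm, hBm]
    simp only [← Matrix.mulVec_mulVec]
    rw [HrotA]
    simp only [Matrix.mulVec_add, Matrix.mulVec_smul, permM_mulVec_ee, EA0, EA1,
      HOa, HOd, EB0, EB1, HT0, HT1, ET0, ET1, HD0, HD1,
      dph_eval0 hn1, smul_smul, smul_add]
    rw [rotS00, rotS01 hn1, rotS10 hn1, rotS11 hn1, star_s2, star_neg, star_s2]
    have hsq := s2_sq
    rcases zmod2_cases (x a) with ha0 | ha0 <;> rcases zmod2_cases (x d) with hd0 | hd0 <;>
      rw [ha0, hd0] <;>
      simp only [bit0, bit1 hn1, rotS00, rotS01 hn1, rotS10 hn1, rotS11 hn1,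
        show ((0 : ZMod 2)).val = 0 from rfl, show ((1 : ZMod 2)).val = 1 from rfl,
        pow_add, pow_zero, pow_one] <;>
      first
        | exact combo0 _ _ _ _ _ _ _ (by ring_nf; norm_num [hsq]; try ring) (by ring)
        | exact combo1 _ _ _ _ _ _ _ (by ring) (by ring_nf; norm_num [hsq]; try ring)
  have hchain2 : Bm *ᵥ (oracleK n x *ᵥ (Am *ᵥ ee ((bitFin n (x c), (1, x d)) : KIdx n)))
      = ((-1 : ℂ) ^ (x b).val) • ee ((bitFin n (x b), (1, x d)) : KIdx n) := by
    have EA0 : (ctrlE (ecP n a d).symm (ecP n c b).symm).symm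
        ((0 : Fin (n + 1)), ((1 : ZMod 2), x d)) = (c.succ, (1, x d)) := by
      rw [ctrlE_symm, Equiv.symm_symm, Equiv.symm_symm, ctrlE_apply1, ecP_zero hn1]
    have EA1 : (ctrlE (ecP n a d).symm (ecP n c b).symm).symm
        ((1 : Fin (n + 1)), ((1 : ZMod 2), x d)) = (b.succ, (1, x d)) := by
      rw [ctrlE_symm, Equiv.symm_symm, Equiv.symm_symm, ctrlE_apply1,
        ecP_one hn1 c b (Ne.symm hbc)]
    have EB0 : (ctrlE (ecP n a d) (ecP n c b)).symm (c.succ, ((1 : ZMod 2), x d))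
        = ((0 : Fin (n + 1)), (1, x d)) := by
      rw [ctrlE_symm, ctrlE_apply1, ecP_symm_zero hn1]
    have EB1 : (ctrlE (ecP n a d) (ecP n c b)).symm (b.succ, ((1 : ZMod 2), x d))
        = ((1 : Fin (n + 1)), (1, x d)) := by
      rw [ctrlE_symm, ctrlE_apply1, ecP_symm_one hn1 c b (Ne.symm hbc)]
    have ET0 : (tauE n hn1).symm ((0 : Fin (n + 1)), ((1 : ZMod 2), x d))
        = ((0 : Fin (n + 1)), (1, x d)) := by
      rw [tauE_symm]
      exact tauF_applyc1 0 (x d)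
    have ET1 : (tauE n hn1).symm ((1 : Fin (n + 1)), ((1 : ZMod 2), x d))
        = ((1 : Fin (n + 1)), (1, x d)) := by
      rw [tauE_symm]
      exact tauF_applyc1 1 (x d)
    have HrotA := rot_mulVec_ee hn1 (bitFin n (x c)) (hbitle (x c)) ((1 : ZMod 2), x d)
    have HT0 := rotT_mulVec_ee hn1 0 (by rw [Fin.val_zero]; omega) ((1 : ZMod 2), x d)
    have HT1 := rotT_mulVec_ee hn1 1 (le_of_eq h1) ((1 : ZMod 2), x d)
    have HOc := oracleK_mulVec_ee x c ((1 : ZMod 2), x d)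
    have HOb := oracleK_mulVec_ee x b ((1 : ZMod 2), x d)
    have HD0 := diag_mulVec_ee (dph n) (((0 : Fin (n + 1)), ((1 : ZMod 2), x d)) : KIdx n)
    have HD1 := diag_mulVec_ee (dph n) (((1 : Fin (n + 1)), ((1 : ZMod 2), x d)) : KIdx n)
    rw [hAm, hBm]
    simp only [← Matrix.mulVec_mulVec]
    rw [HrotA]
    simp only [Matrix.mulVec_add, Matrix.mulVec_smul, permM_mulVec_ee, EA0, EA1,
      HOc, HOb, EB0, EB1, HT0, HT1, ET0, ET1, HD0, HD1,
      dph_eval1, smul_smul, smul_add]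
    rw [rotS00, rotS01 hn1, rotS10 hn1, rotS11 hn1, star_s2, star_neg, star_s2]
    have hsq := s2_sq
    rcases zmod2_cases (x c) with hc0 | hc0 <;> rcases zmod2_cases (x b) with hb0 | hb0 <;>
      rw [hc0, hb0] <;>
      simp only [bit0, bit1 hn1, rotS00, rotS01 hn1, rotS10 hn1, rotS11 hn1,
        show ((0 : ZMod 2)).val = 0 from rfl, show ((1 : ZMod 2)).val = 1 from rfl,
        pow_zero, pow_one, one_mul, mul_one] <;>
      first
        | exact combo0 _ _ _ _ _ _ _ (by ring_nf; norm_num [hsq]; try ring)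
            (by ring)
        | exact combo1 _ _ _ _ _ _ _ (by ring)
            (by ring_nf; norm_num [hsq]; try ring)
  -- reduce the statement to the two column identities
  have hcol1 : ∀ j : KIdx n, (Bm * oracleK n x * Am) j (bitFin n (x a), (0, x b))
      = ((-1 : ℂ) ^ (x b).val) * ee ((bitFin n (x b), (0, x d)) : KIdx n) j := by
    intro j
    have h := congrFun hchain1 j
    rw [Matrix.mulVec_mulVec, Matrix.mulVec_mulVec, mulVec_ee] at h
    simp only [Pi.smul_apply, smul_eq_mul] at h
    exact h
  have hcol2 : ∀ j : KIdx n, (Bm * oracleK n x * Am) j (bitFin n (x c), (1, x d))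
      = ((-1 : ℂ) ^ (x b).val) * ee ((bitFin n (x b), (1, x d)) : KIdx n) j := by
    intro j
    have h := congrFun hchain2 j
    rw [Matrix.mulVec_mulVec, Matrix.mulVec_mulVec, mulVec_ee] at h
    simp only [Pi.smul_apply, smul_eq_mul] at h
    exact h
  have etE : ∀ (k : KIdx n) (W : (Fin m → ZMod 2) → ℂ),
      etens n m k W = fun p : JIdx n m => (1 : Matrix (KIdx n) (KIdx n) ℂ) p.1 k * W p.2 := by
    intro k W
    funext p
    rw [etens, Matrix.one_apply]
  rw [etE _ W1, etE _ W2, Matrix.mulVec_smul, Matrix.mulVec_add, extend_col, extend_col,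
    Matrix.mulVec_smul, Matrix.mulVec_add, extend_col, extend_col,
    Matrix.mulVec_smul, Matrix.mulVec_add, extend_col, extend_col]
  simp only [mul_one, ← mul_assoc]
  funext p
  simp only [Pi.smul_apply, Pi.add_apply, smul_eq_mul, etens]
  rw [hcol1 p.1, hcol2 p.1]
  simp only [ee]
  ring
end
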